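/- arXiv:2307.11849 — 11 statements merged into one kernel-verified Lean document; each statement's English description precedes it below -/
import Mathlib

section
/- Let L = Q(√m) be an imaginary quadratic field with m squarefree, m < 0, and m ≡ 1 (mod 4). Then the minimum of the absolute multiplicative Weil height H(α) over algebraic integers α ∈ O_L with L = Q(α) equals (1/2)(1 + |Δ_L|)^{1/2}, where Δ_L = m is the discriminant of L. -/
open NumberField

/-- `c_K = (2/π)^{s/d} |Δ_K|^{1/(2d)}`. -/
noncomputable def minkowskiConst (K : Type*) [Field K] [NumberField K] : ℝ :=
  (2 / Real.pi) ^ ((InfinitePlace.nrComplexPlaces K : ℝ) / (Module.finrank ℚ K)) *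
    |(discr K : ℝ)| ^ ((1 : ℝ) / (2 * (Module.finrank ℚ K : ℝ)))

/-- Absolute multiplicative Weil height of an algebraic integer of `K`. -/
noncomputable def intHeight {K : Type*} [Field K] [NumberField K] (α : K) : ℝ :=
  (∏ φ : K →+* ℂ, max 1 ‖φ α‖) ^ ((Module.finrank ℚ K : ℝ)⁻¹)

/-- The normalized absolute value `|·|_v = ‖·‖_v^{d_v/d}` at an infinite place. -/
noncomputable def placeNorm {K : Type*} [Field K] [NumberField K]
    (v : InfinitePlace K) (α : K) : ℝ :=
  (v α) ^ ((v.mult : ℝ) / (Module.finrank ℚ K : ℝ))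

open Polynomial in
lemma aux_den (m : ℤ) (hsf : Squarefree m) (t : ℚ) (k : ℤ) (h : (m:ℚ) * t^2 = k) :
    ∃ s : ℤ, t = (s : ℚ) := by
  refine ⟨t.num, ?_⟩
  have hd : (t.den : ℤ) ^ 2 ∣ m * t.num ^ 2 := by
    have h2 : (m:ℚ) * (t.num:ℚ)^2 = (k:ℚ) * (t.den:ℚ)^2 := by
      rw [← Rat.num_div_den t] at h
      have hden : ((t.den : ℚ)) ≠ 0 := by exact_mod_cast t.den_nz
      field_simp at h
      linarith
    have h3 : m * t.num ^ 2 = k * (t.den:ℤ) ^ 2 := by exact_mod_cast h2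
    exact ⟨k, by linarith⟩
  have hdn : t.den ^ 2 ∣ m.natAbs * t.num.natAbs ^ 2 := by
    have := Int.natAbs_dvd_natAbs.mpr hd
    simpa [Int.natAbs_mul, Int.natAbs_pow] using this
  have hcop : Nat.Coprime (t.den ^ 2) (t.num.natAbs ^ 2) :=
    (Nat.Coprime.pow _ _ t.reduced.symm)
  have hdm : t.den ^ 2 ∣ m.natAbs := (Nat.Coprime.dvd_of_dvd_mul_right hcop hdn)
  have hsfn : Squarefree m.natAbs := Int.squarefree_natAbs.mpr hsf
  have : IsUnit t.den := hsfn t.den (by simpa [pow_two] using hdm)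
  have hden1 : t.den = 1 := Nat.isUnit_iff.mp this
  rw [← Rat.num_div_den t, hden1]; simp

set_option maxHeartbeats 1000000 in
open Polynomial in
/-- For an imaginary quadratic field $L=\mathbb{Q}(\sqrt m)$ with $m$ squarefree, $m<0$,
$m\equiv 1\pmod 4$ (so $\Delta_L = m$), the minimum of the Weil height over integral
generators of $L$ is $\frac12(1+|\Delta_L|)^{1/2}$. -/
theorem statement0 (m : ℤ) (hsf : Squarefree m) (hneg : m < 0) (hmod : m % 4 = 1)
    (L : Type*) [Field L] [NumberField L] (r : L) (hr : r ^ 2 = (m : L))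
    (hgenL : IntermediateField.adjoin ℚ {r} = ⊤)
    (hdisc : discr L = m) :
    IsLeast {H : ℝ | ∃ α : 𝓞 L, IntermediateField.adjoin ℚ {(α : L)} = ⊤ ∧
        intHeight (α : L) = H}
      ((1 / 2) * (1 + |(m : ℝ)|) ^ ((1 : ℝ) / 2)) := by
  have hm3 : m ≤ -3 := by omega
  have hmlt : (m : ℝ) < 0 := by exact_mod_cast hneg
  have hmR3 : (m : ℝ) ≤ -3 := by exact_mod_cast hm3
  -- linear independence of 1 and r over ℚ
  have hlin : ∀ a b : ℚ, (a : L) + (b : L) * r = 0 → a = 0 ∧ b = 0 := by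
    intro a b hab
    have hb : b = 0 := by
      by_contra hb
      have keyL : ((m * b^2 : ℚ) : L) = ((a^2 : ℚ) : L) := by
        push_cast
        linear_combination (-((b:L))^2) * hr + ((b:L)*r - (a:L)) * hab
      have key : (m:ℚ) * b^2 = a^2 := by exact_mod_cast keyL
      have hmq : (m:ℚ) < 0 := by exact_mod_cast hneg
      have hb2 : (0:ℚ) < b^2 := by positivity
      nlinarith [sq_nonneg a]
    subst hb
    refine ⟨?_, rfl⟩
    have h0 : ((a:ℚ):L) = ((0:ℚ):L) := by push_cast; simpa using hab
    exact_mod_cast h0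
  have hint_r : IsIntegral ℚ r := IsIntegral.of_finite ℚ r
  have hrni : r ∉ (algebraMap ℚ L).range := by
    rintro ⟨q, hq⟩
    have : ((q^2 : ℚ) : L) = ((m : ℚ) : L) := by
      push_cast
      rw [← hq] at hr
      rw [← hr]
      rw [eq_ratCast (algebraMap ℚ L) q]
    have h2 : (q:ℚ)^2 = (m:ℚ) := by exact_mod_cast this
    have hmq : (m:ℚ) < 0 := by exact_mod_cast hneg
    nlinarith [sq_nonneg q]
  have hdeg : (minpoly ℚ r).natDegree = 2 := by
    have hdvd : minpoly ℚ r ∣ (X^2 - C (m:ℚ)) := by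
      apply minpoly.dvd
      simp only [map_sub, map_pow, aeval_X, aeval_C]
      rw [hr, eq_ratCast (algebraMap ℚ L) (m:ℚ)]
      push_cast
      ring
    have hne : (X^2 - C (m:ℚ)) ≠ 0 := X_pow_sub_C_ne_zero (by norm_num) _
    have hle : (minpoly ℚ r).natDegree ≤ 2 := by
      have := Polynomial.natDegree_le_of_dvd hdvd hne
      rwa [Polynomial.natDegree_X_pow_sub_C] at this
    have hge : 2 ≤ (minpoly ℚ r).natDegree :=
      (minpoly.two_le_natDegree_iff hint_r).mpr hrni
    omega
  have hfr : Module.finrank ℚ L = 2 := by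
    have h1 := IntermediateField.adjoin.finrank hint_r
    rw [hgenL, hdeg, IntermediateField.finrank_top'] at h1
    exact h1
  have hcard : Fintype.card (L →+* ℂ) = 2 := by
    rw [NumberField.Embeddings.card L ℂ, hfr]
  -- coordinates
  have hcoord : ∀ α : L, ∃ x y : ℚ, α = (x : L) + (y : L) * r := by
    intro α
    have hmem : α ∈ Algebra.adjoin ℚ ({r} : Set L) := by
      have hα : α ∈ IntermediateField.adjoin ℚ ({r} : Set L) := by
        rw [hgenL]; trivial
      rwa [← IntermediateField.mem_toSubalgebra,
        IntermediateField.adjoin_simple_toSubalgebra_of_isAlgebraic hint_r.isAlgebraic] at hα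
    refine Algebra.adjoin_induction ?_ ?_ ?_ ?_ hmem
    · rintro s (rfl : s = r)
      exact ⟨0, 1, by push_cast; ring⟩
    · intro q
      exact ⟨q, 0, by rw [eq_ratCast (algebraMap ℚ L) q]; push_cast; ring⟩
    · rintro s t - - ⟨x1, y1, rfl⟩ ⟨x2, y2, rfl⟩
      exact ⟨x1 + x2, y1 + y2, by push_cast; ring⟩
    · rintro s t - - ⟨x1, y1, rfl⟩ ⟨x2, y2, rfl⟩
      exact ⟨x1*x2 + m*y1*y2, x1*y2 + x2*y1, by
        push_cast
        linear_combination ((y1:L)*(y2:L)) * hr⟩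
  -- absolute value computation
  have habs : ∀ (φ : L →+* ℂ) (x y : ℚ),
      ‖φ ((x:L) + (y:L)*r)‖ ^ 2 = (x:ℝ)^2 - (m:ℝ)*(y:ℝ)^2 := by
    intro φ x y
    have hz : (φ r)^2 = (m:ℂ) := by rw [← map_pow, hr, map_intCast]
    set z := φ r with hzdef
    have h1 : z.re^2 - z.im^2 = (m:ℝ) := by
      have := congrArg Complex.re hz
      simpa [pow_two, Complex.mul_re] using this
    have h2 : z.re * z.im + z.im * z.re = 0 := by
      have := congrArg Complex.im hz
      simpa [pow_two, Complex.mul_im] using this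
    have him : z.im ≠ 0 := by
      intro h; rw [h] at h1; nlinarith [sq_nonneg z.re]
    have hre0 : z.re = 0 := by
      rcases mul_eq_zero.mp (by linarith : z.re * z.im = 0) with h | h
      exacts [h, absurd h him]
    have him2 : z.im^2 = -(m:ℝ) := by nlinarith [h1, hre0]
    have hφ : φ ((x:L) + (y:L)*r) = (x:ℂ) + (y:ℂ) * z := by
      rw [map_add, map_mul, map_ratCast, map_ratCast]
    rw [hφ, Complex.sq_norm, Complex.normSq_apply]
    simp only [Complex.add_re, Complex.add_im, Complex.mul_re, Complex.mul_im,
      Complex.ratCast_re, Complex.ratCast_im, hre0]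
    linear_combination (y:ℝ)^2 * him2
  -- height formula
  have hheight : ∀ x y : ℚ, intHeight ((x:L) + (y:L)*r) =
      max 1 (Real.sqrt ((x:ℝ)^2 - (m:ℝ)*(y:ℝ)^2)) := by
    intro x y
    have hconst : ∀ φ : L →+* ℂ, max 1 ‖φ ((x:L)+(y:L)*r)‖ =
        max 1 (Real.sqrt ((x:ℝ)^2 - (m:ℝ)*(y:ℝ)^2)) := by
      intro φ
      congr 1
      rw [← habs φ x y, Real.sqrt_sq (norm_nonneg _)]
    unfold intHeight
    rw [Finset.prod_congr rfl (fun φ _ => hconst φ), Finset.prod_const, hfr,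
      Finset.card_univ, hcard]
    set c := max 1 (Real.sqrt ((x:ℝ)^2 - (m:ℝ)*(y:ℝ)^2)) with hc
    have hc0 : (0:ℝ) ≤ c := le_trans zero_le_one (le_max_left _ _)
    rw [← Real.rpow_natCast c 2, ← Real.rpow_mul hc0]
    norm_num
  -- target rewriting
  have htargeteq : (1 / 2 : ℝ) * (1 + |(m : ℝ)|) ^ ((1 : ℝ) / 2) =
      Real.sqrt ((1 - (m:ℝ))/4) := by
    rw [abs_of_neg hmlt]
    have h4 : (1 - (m : ℝ))/4 = (1 + -(m:ℝ)) * (1/2)^2 := by ring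
    rw [h4, Real.sqrt_mul (by nlinarith) _, Real.sqrt_sq (by norm_num : (0:ℝ) ≤ 1/2),
      Real.sqrt_eq_rpow]
    ring
  obtain ⟨k, hk⟩ : ∃ k : ℤ, m = 4*k + 1 := ⟨m / 4, by omega⟩
  constructor
  · -- membership : α₀ = (1 + r)/2
    set a0 : L := ((1/2 : ℚ) : L) + ((1/2 : ℚ) : L) * r with ha0
    have hmL : (m : L) = 4*(k:L) + 1 := by exact_mod_cast hk
    have hint0 : IsIntegral ℤ a0 := by
      refine ⟨X^2 + (-X + C (-k)), ?_, ?_⟩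
      · apply Polynomial.monic_X_pow_add
        apply lt_of_le_of_lt (Polynomial.degree_add_le _ _)
        rw [Polynomial.degree_neg, Polynomial.degree_X]
        have := Polynomial.degree_C_le (a := (-k : ℤ))
        apply lt_of_le_of_lt (max_le le_rfl (le_trans this (by norm_num)))
        norm_num
      · simp only [eval₂_add, eval₂_pow, eval₂_X, eval₂_neg, eval₂_C]
        have hmap : (algebraMap ℤ L) (-k) = -(k:L) := by
          simp [map_intCast]
        rw [hmap, ha0]
        push_cast
        linear_combination ((1:L)/4) * hr + ((1:L)/4) * hmL
    refine ⟨⟨a0, hint0⟩, ?_, ?_⟩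
    · rw [eq_top_iff, ← hgenL]
      apply IntermediateField.adjoin_le_iff.mpr
      rw [Set.singleton_subset_iff]
      have hmem0 : ((⟨a0, hint0⟩ : 𝓞 L) : L) ∈
          IntermediateField.adjoin ℚ {((⟨a0, hint0⟩ : 𝓞 L) : L)} :=
        IntermediateField.mem_adjoin_simple_self ℚ _
      have hrep : r = ((⟨a0, hint0⟩ : 𝓞 L) : L) + ((⟨a0, hint0⟩ : 𝓞 L) : L) - 1 := by
        show r = a0 + a0 - 1
        rw [ha0]; push_cast; ring
      rw [SetLike.mem_coe, hrep]
      exact sub_mem (add_mem hmem0 hmem0) (one_mem _)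
    · show intHeight a0 = _
      rw [ha0, hheight (1/2) (1/2)]
      have hval : ((1/2:ℚ):ℝ)^2 - (m:ℝ)*((1/2:ℚ):ℝ)^2 = (1 - (m:ℝ))/4 := by
        push_cast; ring
      rw [hval]
      have hge1 : (1:ℝ) ≤ Real.sqrt ((1 - (m:ℝ))/4) := by
        have h14 : (1:ℝ) ≤ (1-(m:ℝ))/4 := by linarith
        calc (1:ℝ) = Real.sqrt 1 := by simp
          _ ≤ Real.sqrt ((1 - (m:ℝ))/4) := Real.sqrt_le_sqrt h14
      rw [max_eq_right hge1, htargeteq]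
  · -- lower bound
    rintro H ⟨α, hgen, rfl⟩
    obtain ⟨x, y, hxy⟩ := hcoord (α : L)
    have hy : y ≠ 0 := by
      intro h
      subst h
      have hb : (α:L) ∈ (⊥ : IntermediateField ℚ L) := by
        apply IntermediateField.mem_bot.mpr
        exact ⟨x, by rw [eq_ratCast (algebraMap ℚ L) x, hxy]; push_cast; ring⟩
      have htop := IntermediateField.adjoin_simple_eq_bot_iff.mpr hb
      rw [hgen] at htop
      have h1 : Module.finrank ℚ (⊥ : IntermediateField ℚ L) = 1 :=
        IntermediateField.finrank_bot
      rw [← htop, IntermediateField.finrank_top', hfr] at h1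
      omega
    have hintα : IsIntegral ℤ (α : L) := α.isIntegral_coe
    set p := minpoly ℤ (α : L) with hpdef
    have hmono : p.Monic := minpoly.monic hintα
    have hmapeq : minpoly ℚ (α:L) = p.map (algebraMap ℤ ℚ) :=
      minpoly.isIntegrallyClosed_eq_field_fractions' ℚ hintα
    have hdegα : (minpoly ℚ (α:L)).natDegree = 2 := by
      have h1 := IntermediateField.adjoin.finrank (IsIntegral.of_finite ℚ (α:L))
      rw [hgen, IntermediateField.finrank_top', hfr] at h1
      omega
    have hpdeg : p.natDegree = 2 := by
      rw [hmapeq, Polynomial.natDegree_map_eq_of_injective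
        (RingHom.injective_int (algebraMap ℤ ℚ))] at hdegα
      exact hdegα
    obtain ⟨u, hu⟩ : ∃ u, p.coeff 1 = u := ⟨_, rfl⟩
    obtain ⟨w, hw⟩ : ∃ w, p.coeff 0 = w := ⟨_, rfl⟩
    have h2 : p.coeff 2 = 1 := by
      have := hmono.coeff_natDegree
      rwa [hpdeg] at this
    have haev : Polynomial.aeval (α:L) p = 0 := minpoly.aeval ℤ (α:L)
    rw [Polynomial.aeval_eq_sum_range, hpdeg] at haev
    rw [Finset.sum_range_succ, Finset.sum_range_succ, Finset.sum_range_one,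
      h2, hu, hw] at haev
    simp only [zsmul_eq_mul, pow_zero, pow_one, mul_one, one_smul] at haev
    have hexp : (α:L)^2 + (u:L)*(α:L) + (w:L) = 0 := by
      linear_combination haev
    rw [hxy] at hexp
    have hb0 := hlin (x^2 + m*y^2 + u*x + w) (2*x*y + u*y) (by
      push_cast
      linear_combination hexp - ((y:L))^2 * hr)
    obtain ⟨ha, hb⟩ := hb0
    have hux : (u:ℚ) = -2*x := by
      rcases mul_eq_zero.mp (show y * (2*x + (u:ℚ)) = 0 by linear_combination hb) with h | h
      · exact absurd h hy
      · linarith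
    have hwx : (w:ℚ) = x^2 - m*y^2 := by
      linear_combination ha - x * hux
    have hmv : (m:ℚ) * (2*y)^2 = ((u^2 - 4*w : ℤ) : ℚ) := by
      push_cast
      linear_combination (-(u:ℚ) + 2*x) * hux + 4 * hwx
    obtain ⟨v, hv⟩ := aux_den m hsf (2*y) (u^2 - 4*w) hmv
    have hv0 : v ≠ 0 := by
      rintro rfl
      simp only [Int.cast_zero] at hv
      exact hy (by linarith)
    have hz : m * v^2 = u^2 - 4*w := by
      have hzq : (m:ℚ) * (v:ℚ)^2 = ((u^2 - 4*w : ℤ):ℚ) := by rw [← hv]; exact hmv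
      exact_mod_cast hzq
    have h4 : (4:ℤ) ∣ u^2 - v^2 := ⟨k*v^2 + w, by linear_combination -hz + v^2 * hk⟩
    -- integer bound
    have hbound : 1 + -m ≤ u^2 + (-m)*v^2 := by
      rcases Int.even_or_odd v with ⟨b, hb2⟩ | ⟨b, hb2⟩
      · have hb0' : b ≠ 0 := by rintro rfl; simp at hb2; exact hv0 hb2
        have hb1 : 1 ≤ b^2 := by
          rcases hb0'.lt_or_gt with h | h <;> nlinarith
        have hv2 : v^2 = 4*b^2 := by rw [hb2]; ring
        nlinarith [sq_nonneg u, mul_le_mul_of_nonneg_left hb1 (show (0:ℤ) ≤ -m by omega), hv2]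
      · rcases Int.even_or_odd u with ⟨a, ha2⟩ | ⟨a, ha2⟩
        · exfalso
          obtain ⟨c, hc⟩ := h4
          rw [ha2, hb2] at hc
          have hdvd1 : (4:ℤ) ∣ 1 := ⟨a^2 - b^2 - b - c, by linear_combination -hc⟩
          norm_num at hdvd1
        · have hu0 : u ≠ 0 := by omega
          have hu1 : 1 ≤ u^2 := by
            rcases hu0.lt_or_gt with h | h <;> nlinarith
          have hv1 : 1 ≤ v^2 := by
            rcases hv0.lt_or_gt with h | h <;> nlinarith
          nlinarith
    -- conclude
    rw [hxy, hheight x y]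
    have hxR : (x:ℝ) = -(u:ℝ)/2 := by
      have : x = -(u:ℚ)/2 := by linarith [hux]
      exact_mod_cast congrArg (Rat.cast : ℚ → ℝ) this
    have hyR : (y:ℝ) = (v:ℝ)/2 := by
      have : y = (v:ℚ)/2 := by linarith [hv]
      exact_mod_cast congrArg (Rat.cast : ℚ → ℝ) this
    have hboundR : (1:ℝ) + -(m:ℝ) ≤ (u:ℝ)^2 + (-(m:ℝ))*(v:ℝ)^2 := by
      exact_mod_cast hbound
    have hbig : ((1:ℝ) - (m:ℝ))/4 ≤ (x:ℝ)^2 - (m:ℝ)*(y:ℝ)^2 := by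
      rw [hxR, hyR]
      nlinarith [hboundR]
    calc (1/2 : ℝ) * (1 + |(m : ℝ)|) ^ ((1:ℝ)/2)
        = Real.sqrt ((1 - (m:ℝ))/4) := htargeteq
      _ ≤ Real.sqrt ((x:ℝ)^2 - (m:ℝ)*(y:ℝ)^2) := Real.sqrt_le_sqrt hbig
      _ ≤ max 1 (Real.sqrt ((x:ℝ)^2 - (m:ℝ)*(y:ℝ)^2)) := le_max_right _ _
end

section
/- Let L = Q(√m) be an imaginary quadratic field with m squarefree and m < 0, and suppose the torsion subgroup of L^× is {±1}. Then c_L = (2/π)^{1/2}|Δ_L|^{1/4} < min{H(α) : α ∈ O_L, L = Q(α)}. -/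
set_option maxHeartbeats 1000000

open NumberField Matrix

private lemma discr_le_aux (L : Type*) [Field L] [NumberField L] (hd : Module.finrank ℚ L = 2)
    (α : 𝓞 L) (hαb : (α : L) ∉ (⊥ : IntermediateField ℚ L))
    (ψ₀ ψ₁ : L →ₐ[ℚ] ℂ) (hneψ : ψ₀ ≠ ψ₁) (hcardψ : Fintype.card (L →ₐ[ℚ] ℂ) = 2)
    (hconj : ψ₁ (α : L) = (starRingEnd ℂ) (ψ₀ (α : L))) :
    |(discr L : ℝ)| ≤ 4 * ‖ψ₀ (α : L)‖ ^ 2 := by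
  classical
  -- the basis (α, 1)
  have hli : LinearIndependent ℚ ![(α : L), 1] := by
    rw [linearIndependent_fin2]
    refine ⟨by simp, fun a ha => hαb ?_⟩
    simp only [Matrix.cons_val_one, Matrix.head_cons, Matrix.cons_val_zero] at ha
    rw [IntermediateField.mem_bot]
    exact ⟨a, by rw [← ha, Algebra.smul_def, mul_one]⟩
  have hcard2 : Fintype.card (Fin 2) = Module.finrank ℚ L := by simp [hd]
  set bα : Module.Basis (Fin 2) ℚ L := basisOfLinearIndependentOfCardEqFinrank hli hcard2 with hbα
  have hbαc : ⇑bα = ![(α : L), 1] := coe_basisOfLinearIndependentOfCardEqFinrank hli hcard2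
  -- reindexed integral basis
  have hcardι : Fintype.card (Module.Free.ChooseBasisIndex ℤ (𝓞 L)) = 2 := by
    rw [← Module.finrank_eq_card_chooseBasisIndex, RingOfIntegers.rank, hd]
  set e' : Module.Free.ChooseBasisIndex ℤ (𝓞 L) ≃ Fin 2 :=
    Fintype.equivFinOfCardEq hcardι with he'
  set B' : Module.Basis (Fin 2) ℚ L := (integralBasis L).reindex e' with hB'
  set P : Matrix (Fin 2) (Fin 2) ℚ := B'.toMatrix ⇑bα with hP
  have h6 : Algebra.discr ℚ (⇑B' ᵥ* (P.map (algebraMap ℚ L))) =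
      P.det ^ 2 * Algebra.discr ℚ ⇑B' := Algebra.discr_of_matrix_vecMul ⇑B' P
  rw [hP, Module.Basis.toMatrix_map_vecMul] at h6
  have h7 : Algebra.discr ℚ ⇑B' = (discr L : ℚ) := by
    rw [hB', Module.Basis.coe_reindex, Algebra.discr_reindex, coe_discr]
  -- P has integral entries
  have hPint : ∀ i j, IsIntegral ℤ (P i j) := by
    intro i j
    rw [hP, Module.Basis.toMatrix_apply, hB', Module.Basis.repr_reindex_apply]
    have : ∀ x : 𝓞 L, IsIntegral ℤ ((integralBasis L).repr (algebraMap (𝓞 L) L x) (e'.symm i)) := by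
      intro x
      rw [integralBasis_repr_apply]
      exact isIntegral_algebraMap
    fin_cases j
    · simpa [hbαc] using this α
    · simpa [hbαc] using this 1
  obtain ⟨c, hc⟩ : ∃ c : ℤ, algebraMap ℤ ℚ c = P.det :=
    IsIntegrallyClosed.isIntegral_iff.mp (IsIntegral.det fun i j => hPint i j)
  have hc0 : c ≠ 0 := by
    intro h
    have hdiscr0 : Algebra.discr ℚ ⇑bα ≠ 0 := by
      have := Algebra.discr_not_zero_of_basis ℚ bα
      exact this
    apply hdiscr0
    rw [h6, ← hc, h]
    simp
  -- embeddings matrix computation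
  have hbij : Function.Bijective ![ψ₀, ψ₁] := by
    rw [Fintype.bijective_iff_injective_and_card]
    refine ⟨?_, by rw [hcardψ]; simp⟩
    intro i j hij
    fin_cases i <;> fin_cases j <;>
      simp only [Matrix.cons_val_zero, Matrix.cons_val_one, Matrix.head_cons] at hij <;>
      first
        | rfl
        | exact absurd hij hneψ
        | exact absurd hij.symm hneψ
  set e2 : Fin 2 ≃ (L →ₐ[ℚ] ℂ) := Equiv.ofBijective ![ψ₀, ψ₁] hbij with he2
  have h8 : algebraMap ℚ ℂ (Algebra.discr ℚ ⇑bα) =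
      (Algebra.embeddingsMatrixReindex ℚ ℂ ⇑bα e2).det ^ 2 :=
    Algebra.discr_eq_det_embeddingsMatrixReindex_pow_two ℚ ℂ ⇑bα e2
  have hdet : (Algebra.embeddingsMatrixReindex ℚ ℂ ⇑bα e2).det
      = ψ₀ (α : L) - ψ₁ (α : L) := by
    rw [Matrix.det_fin_two]
    simp [Algebra.embeddingsMatrixReindex, Algebra.embeddingsMatrix, Matrix.reindex_apply,
      Matrix.submatrix_apply, hbαc, he2, Equiv.ofBijective]
  set β : ℂ := ψ₀ (α : L) with hβ
  set D : ℝ := ((Algebra.discr ℚ ⇑bα : ℚ) : ℝ) with hD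
  have hDL : |(discr L : ℝ)| ≤ |D| := by
    have hc' : P.det = (c : ℚ) := by rw [← hc]; simp
    have h9 : D = (c : ℝ) ^ 2 * (discr L : ℝ) := by
      rw [hD, h6, h7, hc']
      push_cast
      ring
    have hc1 : (1 : ℝ) ≤ (c : ℝ) ^ 2 := by
      have h := abs_pos.mpr hc0
      have : (1 : ℤ) ≤ c ^ 2 := by nlinarith [sq_abs c]
      exact_mod_cast this
    rw [h9, abs_mul, abs_of_nonneg (by positivity : (0:ℝ) ≤ (c:ℝ)^2)]
    nlinarith [abs_nonneg ((discr L : ℝ))]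
  have hDC : (D : ℂ) = (β - (starRingEnd ℂ) β) ^ 2 := by
    rw [hD]
    rw [show (((Algebra.discr ℚ ⇑bα : ℚ) : ℝ) : ℂ) = algebraMap ℚ ℂ (Algebra.discr ℚ ⇑bα) by
      push_cast; simp]
    rw [h8, hdet, hconj, hβ]
  have hDabs : |D| ≤ 4 * ‖β‖ ^ 2 := by
    have h10 : |D| = ‖(D : ℂ)‖ := by rw [Complex.norm_real, Real.norm_eq_abs]
    rw [h10, hDC, norm_pow]
    have h11 : β - (starRingEnd ℂ) β = (2 * β.im : ℝ) * Complex.I := Complex.sub_conj β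
    rw [h11]
    have h12 : ‖(2 * β.im : ℝ) * Complex.I‖ = |2 * β.im| := by
      rw [norm_mul, Complex.norm_I, mul_one, Complex.norm_real, Real.norm_eq_abs]
    rw [h12, sq_abs]
    have h13 : |β.im| ≤ ‖β‖ := Complex.abs_im_le_norm β
    have h14 : (0:ℝ) ≤ ‖β‖ := norm_nonneg β
    nlinarith [abs_nonneg β.im, sq_abs β.im]
  calc |(discr L : ℝ)| ≤ |D| := hDL
    _ ≤ 4 * ‖β‖ ^ 2 := hDabs

private lemma arith_aux (x t : ℝ) (hx : 1 ≤ x) (hxt : x ≤ 4 * t ^ 2) (ht2 : 2 ≤ t ^ 2)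
    (ht : 0 ≤ t) :
    (2 / Real.pi) ^ ((1 : ℝ) / 2) * x ^ ((1 : ℝ) / 4) < t := by
  have hπ : (3 : ℝ) < Real.pi := Real.pi_gt_three
  have hπ0 : (0 : ℝ) < Real.pi := by linarith
  have h2π : (0:ℝ) ≤ 2 / Real.pi := by positivity
  have hx0 : (0:ℝ) ≤ x := by linarith
  refine lt_of_pow_lt_pow_left₀ 2 ht ?_
  have e1 : ((2 / Real.pi) ^ ((1 : ℝ) / 2) * x ^ ((1 : ℝ) / 4)) ^ 2
      = (2 / Real.pi) * x ^ ((1 : ℝ) / 2) := by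
    rw [mul_pow, ← Real.rpow_natCast ((2 / Real.pi) ^ ((1:ℝ)/2)) 2,
      ← Real.rpow_natCast (x ^ ((1:ℝ)/4)) 2, ← Real.rpow_mul h2π, ← Real.rpow_mul hx0]
    norm_num
  rw [e1]
  set s : ℝ := x ^ ((1:ℝ)/2) with hs
  have hs0 : 0 ≤ s := Real.rpow_nonneg hx0 _
  have hs2 : s ^ 2 = x := by
    rw [hs, ← Real.rpow_natCast (x ^ ((1:ℝ)/2)) 2, ← Real.rpow_mul hx0]
    norm_num
  have hst : s ^ 2 ≤ 4 * t ^ 2 := by rw [hs2]; exact hxt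
  rw [div_mul_eq_mul_div, div_lt_iff₀ hπ0]
  -- goal : 2 * s < t ^ 2 * π
  nlinarith [sq_nonneg (3 * s - 8), sq_nonneg s, sq_nonneg t]

/-- If $L=\mathbb{Q}(\sqrt m)$ is imaginary quadratic with torsion subgroup of
$L^\times$ equal to $\{\pm 1\}$, then $c_L < \min\{H(\alpha)\}$ over integral
generators $\alpha$ of $L$. -/
theorem statement2 (m : ℤ) (hsf : Squarefree m) (hneg : m < 0)
    (L : Type*) [Field L] [NumberField L] (r : L) (hr : r ^ 2 = (m : L))
    (hgenL : IntermediateField.adjoin ℚ {r} = ⊤)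
    (htor : ∀ x : L, (∃ n : ℕ, 0 < n ∧ x ^ n = 1) → x = 1 ∨ x = -1) :
    ∀ α : 𝓞 L, IntermediateField.adjoin ℚ {(α : L)} = ⊤ →
      minkowskiConst L < intHeight (α : L) := by
  classical
  intro α hgen
  -- the degree is 2
  have hd : Module.finrank ℚ L = 2 := by
    have hint : IsIntegral ℚ r := IsIntegral.of_finite ℚ r
    have hmin : minpoly ℚ r = Polynomial.X ^ 2 - Polynomial.C (m : ℚ) := by
      refine (minpoly.eq_of_irreducible_of_monic ?_ ?_ ?_).symm
      · exact X_pow_sub_C_irreducible_of_prime Nat.prime_two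
          (fun b hb => absurd (hb ▸ sq_nonneg b)
            (by exact_mod_cast not_le.2 (show (m:ℚ) < 0 by exact_mod_cast hneg)))
      · simp [hr]
      · exact (Polynomial.monic_X_pow_sub_C _ two_ne_zero)
    have h1 : Module.finrank ℚ (IntermediateField.adjoin ℚ {r}) = 2 := by
      rw [IntermediateField.adjoin.finrank hint, hmin]
      exact Polynomial.natDegree_X_pow_sub_C
    have e : (IntermediateField.adjoin ℚ {r}) ≃ₐ[ℚ] L :=
      (IntermediateField.equivOfEq hgenL).trans IntermediateField.topEquiv
    rw [← e.toLinearEquiv.finrank_eq, h1]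
  -- every embedding sends r to a non-real number
  have him : ∀ φ : L →+* ℂ, (φ r).im ≠ 0 := by
    intro φ h0
    have h2 : (φ r) ^ 2 = (m : ℂ) := by rw [← map_pow, hr]; simp [map_intCast]
    have h3 : ((φ r) ^ 2).re = (m : ℝ) := by rw [h2]; simp
    rw [sq, Complex.mul_re, h0] at h3
    have : (m : ℝ) < 0 := by exact_mod_cast hneg
    nlinarith [sq_nonneg (φ r).re]
  -- exactly one complex place
  have hc : NumberField.InfinitePlace.nrComplexPlaces L = 1 := by
    have h0 : NumberField.InfinitePlace.nrRealPlaces L = 0 := by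
      have : IsEmpty { w : NumberField.InfinitePlace L // w.IsReal } := by
        refine ⟨fun ⟨w, hw⟩ => ?_⟩
        have hre := NumberField.InfinitePlace.isReal_iff.mp hw
        have h1 : (starRingEnd ℂ) (w.embedding r) = w.embedding r := by
          have := NumberField.ComplexEmbedding.isReal_iff.mp hre
          exact congrFun (congrArg DFunLike.coe this) r
        exact him w.embedding (by rwa [Complex.conj_eq_iff_im] at h1)
      exact Fintype.card_eq_zero
    have := NumberField.InfinitePlace.card_add_two_mul_card_eq_rank L
    rw [h0, hd] at this
    omega
  -- α is not in the base field
  have hnotbot : (α : L) ∉ (⊥ : IntermediateField ℚ L) := by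
    intro hmem
    have h1 : IntermediateField.adjoin ℚ {(α : L)} ≤ ⊥ :=
      IntermediateField.adjoin_le_iff.mpr (by simpa using hmem)
    rw [hgen] at h1
    have h2 : (⊥ : IntermediateField ℚ L) = ⊤ := le_antisymm le_top h1
    have h3 : Module.finrank ℚ (⊥ : IntermediateField ℚ L) = 1 :=
      IntermediateField.finrank_bot
    rw [h2, IntermediateField.topEquiv.toLinearEquiv.finrank_eq, hd] at h3
    exact absurd h3 (by decide)
  have hα0 : (α : L) ≠ 0 := fun h => hnotbot (h ▸ zero_mem _)
  -- the two embeddings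
  have hcard : Fintype.card (L →+* ℂ) = 2 := by
    rw [NumberField.Embeddings.card L ℂ, hd]
  obtain ⟨φ₀⟩ : Nonempty (L →+* ℂ) := Fintype.card_pos_iff.mp (by rw [hcard]; norm_num)
  set φ₁ : L →+* ℂ := (starRingEnd ℂ).comp φ₀ with hφ₁
  have hne : φ₀ ≠ φ₁ := by
    intro h
    apply him φ₀
    have : φ₀ r = φ₁ r := by rw [← h]
    rw [hφ₁] at this
    simp only [RingHom.coe_comp, Function.comp_apply] at this
    have := (Complex.conj_eq_iff_im).mp this.symm
    exact this
  have huniv : (Finset.univ : Finset (L →+* ℂ)) = {φ₀, φ₁} :=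
    (Finset.eq_univ_of_card _ (by rw [Finset.card_pair hne, hcard])).symm
  set β : ℂ := φ₀ (α : L) with hβ
  set t : ℝ := ‖β‖ with htdef
  have ht0 : 0 ≤ t := norm_nonneg β
  have hφ₁α : φ₁ (α : L) = (starRingEnd ℂ) β := rfl
  -- the algebra homs
  set ψ₀ : L →ₐ[ℚ] ℂ := RingHom.equivRatAlgHom L ℂ φ₀ with hψ₀
  set ψ₁ : L →ₐ[ℚ] ℂ := RingHom.equivRatAlgHom L ℂ φ₁ with hψ₁
  have hneψ : ψ₀ ≠ ψ₁ := fun h => hne ((RingHom.equivRatAlgHom L ℂ).injective (by rw [← hψ₀, ← hψ₁, h]))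
  have hcardψ : Fintype.card (L →ₐ[ℚ] ℂ) = 2 := by
    rw [← hcard]; exact (Fintype.card_congr (RingHom.equivRatAlgHom L ℂ)).symm
  have hunivψ : (Finset.univ : Finset (L →ₐ[ℚ] ℂ)) = {ψ₀, ψ₁} :=
    (Finset.eq_univ_of_card _ (by rw [Finset.card_pair hneψ, hcardψ])).symm
  have hψ₀α : ψ₀ (α : L) = β := rfl
  have hψ₁α : ψ₁ (α : L) = (starRingEnd ℂ) β := rfl
  -- the norm
  set N : ℤ := Algebra.norm ℤ α with hNdef
  have hNt : (N : ℝ) = t ^ 2 := by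
    have h1 : algebraMap ℚ ℂ (Algebra.norm ℚ (α : L)) = ∏ σ : L →ₐ[ℚ] ℂ, σ (α : L) :=
      Algebra.norm_eq_prod_embeddings ℚ ℂ (α : L)
    rw [hunivψ, Finset.prod_pair hneψ, hψ₀α, hψ₁α] at h1
    have h2 : ((N : ℚ) : ℂ) = ((t ^ 2 : ℝ) : ℂ) := by
      rw [show ((N : ℚ) : ℂ) = algebraMap ℚ ℂ (N : ℚ) by simp,
        hNdef, Algebra.coe_norm_int, h1, Complex.mul_conj, htdef, Complex.sq_norm]
    have h3 : ((N : ℝ) : ℂ) = ((t ^ 2 : ℝ) : ℂ) := by push_cast at h2 ⊢; exact_mod_cast h2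
    exact_mod_cast h3
  have hN0 : N ≠ 0 := by
    intro h
    have : (Algebra.norm ℚ) (α : L) ≠ 0 := Algebra.norm_ne_zero_iff.mpr hα0
    apply this
    rw [← Algebra.coe_norm_int, ← hNdef, h]; simp
  have hN1 : N ≠ 1 := by
    intro h
    have ht1 : t = 1 := by
      have : t ^ 2 = 1 := by rw [← hNt, h]; norm_num
      nlinarith
    have habs : ∀ φ : L →+* ℂ, ‖φ (α : L)‖ = 1 := by
      intro φ
      have : φ ∈ (Finset.univ : Finset (L →+* ℂ)) := Finset.mem_univ φ
      rw [huniv] at this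
      rcases Finset.mem_insert.mp this with h' | h'
      · rw [h']; simpa using ht1
      · rw [Finset.mem_singleton.mp h', hφ₁α]
        simpa using ht1
    obtain ⟨n, hn, hpow⟩ := NumberField.Embeddings.pow_eq_one_of_norm_eq_one L ℂ
      (RingOfIntegers.isIntegral_coe α) habs
    rcases htor (α : L) ⟨n, hn, hpow⟩ with h' | h'
    · exact hnotbot (h' ▸ one_mem _)
    · exact hnotbot (h' ▸ neg_mem (one_mem _))
  have hN2 : 2 ≤ N := by
    have hNpos : 0 < N := by
      rcases lt_trichotomy N 0 with h | h | h
      · exfalso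
        have : (N : ℝ) < 0 := by exact_mod_cast h
        nlinarith [sq_nonneg t]
      · exact absurd h hN0
      · exact h
    omega
  have ht2 : 2 ≤ t ^ 2 := by
    rw [← hNt]; exact_mod_cast hN2
  have ht1 : 1 ≤ t := by nlinarith
  -- the height equals t
  have hheight : intHeight (α : L) = t := by
    rw [intHeight, hd]
    have hprod : (∏ φ : L →+* ℂ, max 1 ‖φ (α : L)‖) = t ^ 2 := by
      rw [huniv, Finset.prod_pair hne, hφ₁α, Complex.norm_conj, ← hβ, ← htdef,
        max_eq_right ht1]
      ring
    rw [hprod]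
    rw [← Real.rpow_natCast t 2, ← Real.rpow_mul ht0]
    norm_num
  -- discriminant bound
  have hdisc : |(discr L : ℝ)| ≤ 4 * t ^ 2 := by
    have h := discr_le_aux L hd α hnotbot ψ₀ ψ₁ hneψ hcardψ (by rw [hψ₁α, hψ₀α])
    rwa [hψ₀α, ← htdef] at h
  -- conclude
  have hdisc1 : (1 : ℝ) ≤ |(discr L : ℝ)| := by
    have h0 : discr L ≠ 0 := NumberField.discr_ne_zero L
    have h1 : (1 : ℤ) ≤ |discr L| := by
      have := abs_pos.mpr h0
      omega
    rw [← Int.cast_abs]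
    exact_mod_cast h1
  rw [minkowskiConst, hc, hd, hheight]
  have harith := arith_aux |(discr L : ℝ)| t hdisc1 hdisc ht2 ht0
  convert harith using 3 <;> norm_num
end

section
/- Let K be a number field with at least two archimedean places, let w be an archimedean place of K, and for each archimedean place v ≠ w let 0 < B_v ≤ 1. Then there exists a nonzero algebraic integer ξ ∈ O_K such that |ξ|_v < B_v for all archimedean v ≠ w, |ξ|_w ≤ c_K ∏_{v|∞, v≠w} B_v^{-1}, and H(ξ) = |ξ|_w. -/
open NumberField

section aux

open NumberField.InfinitePlace NumberField.mixedEmbedding MeasureTheory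

variable (K : Type*) [Field K] [NumberField K]

lemma aux_minkowskiConst_pos : 0 < minkowskiConst K := by
  have h1 : (0:ℝ) < 2 / Real.pi := by positivity
  have h2 : (0:ℝ) < |(discr K : ℝ)| := by
    rw [abs_pos, ne_eq, Int.cast_eq_zero]
    exact discr_ne_zero K
  exact mul_pos (Real.rpow_pos_of_pos h1 _) (Real.rpow_pos_of_pos h2 _)

lemma aux_minkowskiConst_pow :
    minkowskiConst K ^ (Module.finrank ℚ K) =
      (2 / Real.pi) ^ nrComplexPlaces K * Real.sqrt |(discr K : ℝ)| := by
  have hd : (Module.finrank ℚ K : ℝ) ≠ 0 := Nat.cast_ne_zero.mpr Module.finrank_pos.ne'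
  have h2π : (0:ℝ) ≤ 2 / Real.pi := by positivity
  have hΔ : (0:ℝ) ≤ |(discr K : ℝ)| := abs_nonneg _
  rw [minkowskiConst, mul_pow]
  congr 1
  · rw [← Real.rpow_natCast ((2 / Real.pi) ^ _) (Module.finrank ℚ K), ← Real.rpow_mul h2π,
      div_mul_cancel₀ _ hd, Real.rpow_natCast]
  · rw [← Real.rpow_natCast (|(discr K : ℝ)| ^ _) (Module.finrank ℚ K), ← Real.rpow_mul hΔ,
      Real.sqrt_eq_rpow]
    congr 1
    field_simp

lemma aux_minkowski (g : InfinitePlace K → NNReal)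
    (hg : minkowskiConst K ^ (Module.finrank ℚ K) <
      ∏ v : InfinitePlace K, (g v : ℝ) ^ mult v) :
    ∃ a : 𝓞 K, a ≠ 0 ∧ ∀ v : InfinitePlace K, v (algebraMap (𝓞 K) K a) < g v := by
  refine exists_ne_zero_mem_ringOfIntegers_lt K (f := g) ?_
  rw [convexBodyLT_volume, ← ENNReal.coe_mul,
    ← ENNReal.toReal_lt_toReal (minkowskiBound_lt_top K 1).ne ENNReal.coe_ne_top]
  have hL : (minkowskiBound K 1).toReal =
      (2:ℝ)⁻¹ ^ nrComplexPlaces K * Real.sqrt |(discr K : ℝ)| * 2 ^ (Module.finrank ℚ K) := by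
    rw [minkowskiBound, volume_fundamentalDomain_fractionalIdealLatticeBasis,
      volume_fundamentalDomain_latticeBasis, mixedEmbedding.finrank, Units.val_one,
      FractionalIdeal.absNorm_one, Rat.cast_one, ENNReal.ofReal_one, one_mul]
    rw [ENNReal.toReal_mul, ENNReal.toReal_mul, ENNReal.toReal_pow, ENNReal.toReal_pow,
      ENNReal.toReal_inv, ENNReal.toReal_ofNat, ENNReal.coe_toReal, Real.coe_sqrt, coe_nnnorm,
      Int.norm_eq_abs]
  have hR : (((convexBodyLTFactor K * ∏ v : InfinitePlace K,
      (g v) ^ mult v : NNReal)) : ENNReal).toReal =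
      ((2:ℝ) ^ nrRealPlaces K * Real.pi ^ nrComplexPlaces K) *
        ∏ v : InfinitePlace K, (g v : ℝ) ^ mult v := by
    simp_rw [ENNReal.coe_toReal, convexBodyLTFactor, NNReal.coe_mul, NNReal.coe_prod,
      NNReal.coe_pow, NNReal.coe_real_pi, NNReal.coe_ofNat]
  rw [hL, hR]
  calc (2:ℝ)⁻¹ ^ nrComplexPlaces K * Real.sqrt |(discr K : ℝ)| * 2 ^ (Module.finrank ℚ K)
      = ((2:ℝ) ^ nrRealPlaces K * Real.pi ^ nrComplexPlaces K) *
        (minkowskiConst K ^ (Module.finrank ℚ K)) := by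
        rw [aux_minkowskiConst_pow, ← card_add_two_mul_card_eq_rank, pow_add, pow_mul, div_pow]
        have hπ : Real.pi ≠ 0 := Real.pi_ne_zero
        field_simp
        rw [show ((2:ℝ)^2)^nrComplexPlaces K = 2^nrComplexPlaces K * 2^nrComplexPlaces K by
          rw [← mul_pow]; norm_num]
        field_simp
        rw [one_div, inv_pow, mul_comm, ← mul_assoc, mul_inv_cancel₀ (by positivity), one_mul]
    _ < ((2:ℝ) ^ nrRealPlaces K * Real.pi ^ nrComplexPlaces K) *
        ∏ v : InfinitePlace K, (g v : ℝ) ^ mult v := by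
        refine mul_lt_mul_of_pos_left hg ?_
        positivity

lemma aux_height (x : K) :
    ∏ φ : K →+* ℂ, max 1 ‖φ x‖ =
      ∏ v : InfinitePlace K, max 1 (v x) ^ mult v := by
  classical
  rw [← Finset.prod_fiberwise Finset.univ (fun φ => InfinitePlace.mk φ)
    (fun φ => max 1 ‖φ x‖)]
  refine Finset.prod_congr rfl fun v _ => ?_
  rw [Finset.prod_congr rfl (g := fun _ => max 1 (v x)) (fun φ hφ => ?_), Finset.prod_const,
    card_filter_mk_eq]
  rw [← (Finset.mem_filter.mp hφ).2, InfinitePlace.apply]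

end aux

open NumberField.InfinitePlace
/-- Lemma 2.1: given an archimedean place $w$ of $K$ (with at least two archimedean
places) and bounds $0<B_v\le 1$ at the other archimedean places, there is a nonzero
$\xi\in O_K$ with $|\xi|_v<B_v$ for $v\ne w$, $|\xi|_w\le c_K\prod B_v^{-1}$, and
$H(\xi)=|\xi|_w$. -/
theorem statement4 (K : Type*) [Field K] [NumberField K] [DecidableEq (InfinitePlace K)]
    (hcard : 2 ≤ Fintype.card (InfinitePlace K))
    (w : InfinitePlace K) (B : InfinitePlace K → ℝ)
    (hB : ∀ v : InfinitePlace K, v ≠ w → 0 < B v ∧ B v ≤ 1) :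
    ∃ ξ : 𝓞 K, ξ ≠ 0 ∧
      (∀ v : InfinitePlace K, v ≠ w → placeNorm v (ξ : K) < B v) ∧
      placeNorm w (ξ : K) ≤ minkowskiConst K * ∏ v ∈ Finset.univ.erase (α := InfinitePlace K) w, (B v)⁻¹ ∧
      intHeight (ξ : K) = placeNorm w (ξ : K) := by
  classical
  have hd0 : 0 < Module.finrank ℚ K := Module.finrank_pos
  set d : ℕ := Module.finrank ℚ K with hdd
  have hdR : (0:ℝ) < (d : ℝ) := Nat.cast_pos.mpr hd0
  have hcK : 0 < minkowskiConst K := aux_minkowskiConst_pos K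
  -- real bounds at places ≠ w
  set F : InfinitePlace K → ℝ := fun v => (B v) ^ ((d : ℝ) / (v.mult : ℝ)) with hF
  have hFpos : ∀ v, v ≠ w → 0 < F v := fun v hv =>
    Real.rpow_pos_of_pos (hB v hv).1 _
  have hFle1 : ∀ v, v ≠ w → F v ≤ 1 := fun v hv =>
    Real.rpow_le_one (hB v hv).1.le (hB v hv).2 (by positivity)
  set T : ℝ := minkowskiConst K * ∏ v ∈ Finset.univ.erase w, (B v)⁻¹ with hT
  have hTpos : 0 < T := by
    refine mul_pos hcK (Finset.prod_pos fun v hv => ?_)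
    exact inv_pos.mpr (hB v (Finset.ne_of_mem_erase hv)).1
  set t : ℝ := T ^ ((d : ℝ) / (w.mult : ℝ)) with ht
  have htpos : 0 < t := Real.rpow_pos_of_pos hTpos _
  -- key existence for each ε > 0
  have key : ∀ ε : ℝ, 0 < ε → ∃ a : 𝓞 K, a ≠ 0 ∧
      (∀ v, v ≠ w → v (algebraMap (𝓞 K) K a) < F v) ∧ w (algebraMap (𝓞 K) K a) < t + ε := by
    intro ε hε
    set g : InfinitePlace K → NNReal :=
      fun v => if v = w then (t + ε).toNNReal else (F v).toNNReal with hg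
    have hgcoe : ∀ v, v ≠ w → ((g v : ℝ)) = F v := by
      intro v hv
      simp only [hg, if_neg hv, Real.coe_toNNReal _ (hFpos v hv).le]
    have hgw : ((g w : ℝ)) = t + ε := by
      simp only [hg, if_pos rfl, Real.coe_toNNReal _ (by positivity : (0:ℝ) ≤ t + ε)]
    have hkey : minkowskiConst K ^ d <
        ∏ v : InfinitePlace K, (g v : ℝ) ^ mult v := by
      have hprod : ∏ v : InfinitePlace K, (g v : ℝ) ^ mult v =
        (t + ε) ^ mult w * ∏ v ∈ Finset.univ.erase w, (B v) ^ d := by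
        rw [← Finset.mul_prod_erase Finset.univ _ (Finset.mem_univ w), hgw]
        congr 1
        refine Finset.prod_congr rfl fun v hv => ?_
        have hvw := Finset.ne_of_mem_erase hv
        rw [hgcoe v hvw, hF]
        rw [← Real.rpow_natCast ((B v) ^ ((d:ℝ)/(v.mult:ℝ))) (mult v), ← Real.rpow_mul (hB v hvw).1.le,
          div_mul_cancel₀ _ (Nat.cast_ne_zero.mpr (mult_ne_zero : mult v ≠ 0)), Real.rpow_natCast]
      have htpow : t ^ mult w = T ^ d := by
        rw [ht, ← Real.rpow_natCast (T ^ ((d:ℝ)/(w.mult:ℝ))) (mult w), ← Real.rpow_mul hTpos.le,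
          div_mul_cancel₀ _ (Nat.cast_ne_zero.mpr (mult_ne_zero : mult w ≠ 0)), Real.rpow_natCast]
      have hTd : T ^ d * ∏ v ∈ Finset.univ.erase w, (B v) ^ d = minkowskiConst K ^ d := by
        rw [hT, mul_pow, ← Finset.prod_pow, mul_assoc, ← Finset.prod_mul_distrib]
        rw [Finset.prod_congr rfl (fun v hv => ?_), Finset.prod_const_one, mul_one]
        rw [← mul_pow, inv_mul_cancel₀ (hB v (Finset.ne_of_mem_erase hv)).1.ne', one_pow]
      rw [hprod, ← hTd]
      have hBpos : (0:ℝ) < ∏ v ∈ Finset.univ.erase w, (B v) ^ d :=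
        Finset.prod_pos fun v hv => pow_pos (hB v (Finset.ne_of_mem_erase hv)).1 _
      have hlt' : t ^ mult w < (t + ε) ^ mult w := by
        exact pow_lt_pow_left₀ (by linarith) htpos.le mult_ne_zero
      calc T ^ d * ∏ v ∈ Finset.univ.erase w, (B v) ^ d
          = t ^ mult w * ∏ v ∈ Finset.univ.erase w, (B v) ^ d := by rw [htpow]
        _ < (t + ε) ^ mult w * ∏ v ∈ Finset.univ.erase w, (B v) ^ d :=
            mul_lt_mul_of_pos_right hlt' hBpos
    obtain ⟨a, ha, hlt⟩ := aux_minkowski K g hkey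
    refine ⟨a, ha, fun v hv => ?_, ?_⟩
    · have := hlt v; rwa [hgcoe v hv] at this
    · have := hlt w; rwa [hgw] at this
  -- the finite set of candidates
  set A : Set (𝓞 K) := {a | a ≠ 0 ∧
      (∀ v, v ≠ w → v (algebraMap (𝓞 K) K a) < F v) ∧ w (algebraMap (𝓞 K) K a) < t + 1} with hA
  have hAfin : A.Finite := by
    have hS : {x : K | IsIntegral ℤ x ∧ ∀ φ : K →+* ℂ, ‖φ x‖ ≤ t + 1}.Finite :=
      NumberField.Embeddings.finite_of_norm_le K ℂ (t + 1)
    refine Set.Finite.of_finite_image (f := fun a : 𝓞 K => algebraMap (𝓞 K) K a) ?_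
      ((RingOfIntegers.coe_injective (K := K)).injOn)
    refine hS.subset ?_
    rintro x ⟨a, ⟨ha0, ha1, ha2⟩, rfl⟩
    refine ⟨(a : 𝓞 K).isIntegral_coe, fun φ => ?_⟩
    have : ‖φ (algebraMap (𝓞 K) K a)‖ = (InfinitePlace.mk φ) (algebraMap (𝓞 K) K a) := by
      rw [InfinitePlace.apply]
    rw [this]
    by_cases hφ : InfinitePlace.mk φ = w
    · rw [hφ]; exact ha2.le
    · exact ((ha1 _ hφ).trans_le ((hFle1 _ hφ).trans (by linarith))).le
  have hAne : A.Nonempty := by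
    obtain ⟨a, h1, h2, h3⟩ := key 1 one_pos
    exact ⟨a, h1, h2, h3⟩
  obtain ⟨a, haA, hmin⟩ := Set.exists_min_image A (fun x => w (algebraMap (𝓞 K) K x)) hAfin hAne
  obtain ⟨ha0, haF, haw⟩ := haA
  -- the minimal element satisfies w a ≤ t
  have hwa : w (algebraMap (𝓞 K) K a) ≤ t := by
    by_contra hcon
    push_neg at hcon
    obtain ⟨b, hb0, hb1, hb2⟩ := key ((w (algebraMap (𝓞 K) K a) - t) / 2) (by linarith)
    have hbA : b ∈ A := by
      refine ⟨hb0, hb1, hb2.trans_le ?_⟩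
      have : w (algebraMap (𝓞 K) K a) < t + 1 := haw
      linarith
    have := hmin b hbA
    nlinarith [hb2]
  -- now conclude
  have hcoe : ∀ x : 𝓞 K, algebraMap (𝓞 K) K x = (x : K) := fun _ => rfl
  refine ⟨a, ha0, ?_, ?_, ?_⟩
  · intro v hv
    have h1 : v (a : K) < F v := by rw [← hcoe]; exact haF v hv
    have h2 : (0:ℝ) < (mult v : ℝ) / (d : ℝ) := by
      have : (0:ℝ) < (mult v : ℝ) := Nat.cast_pos.mpr mult_pos
      positivity
    have := Real.rpow_lt_rpow (AbsoluteValue.nonneg _ _) h1 h2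
    rw [placeNorm, ← hdd]
    refine this.trans_le (le_of_eq ?_)
    rw [hF, ← Real.rpow_mul (hB v hv).1.le,
      div_mul_div_comm, mul_comm ((d:ℝ)), div_self (by
        have h3 : (0:ℝ) < (mult v : ℝ) := Nat.cast_pos.mpr mult_pos
        positivity), Real.rpow_one]
  · have h1 : w (a : K) ≤ t := by rw [← hcoe]; exact hwa
    have h2 : (0:ℝ) ≤ (mult w : ℝ) / (d : ℝ) := by positivity
    have := Real.rpow_le_rpow (AbsoluteValue.nonneg _ _) h1 h2
    rw [placeNorm, ← hdd]
    refine this.trans (le_of_eq ?_)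
    rw [ht, ← Real.rpow_mul hTpos.le, div_mul_div_comm, mul_comm ((d:ℝ)),
      div_self (by
        have h3 : (0:ℝ) < (mult w : ℝ) := Nat.cast_pos.mpr mult_pos
        positivity), Real.rpow_one]
  · -- height computation
    have hlt1 : ∀ ⦃z⦄, z ≠ w → z (a : K) < 1 := by
      intro z hz
      exact ((haF z hz).trans_le (hFle1 z hz))
    have hw1 : 1 ≤ w (a : K) := one_le_of_lt_one ha0 hlt1
    rw [intHeight, aux_height]
    have hprod : ∏ v : InfinitePlace K, max 1 (v (a : K)) ^ mult v
        = (w (a : K)) ^ mult w := by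
      rw [← Finset.mul_prod_erase Finset.univ _ (Finset.mem_univ w), max_eq_right hw1]
      rw [Finset.prod_congr rfl (g := fun _ => 1) (fun v hv => ?_), Finset.prod_const_one, mul_one]
      rw [max_eq_left (hlt1 (Finset.ne_of_mem_erase hv)).le, one_pow]
    rw [hprod, placeNorm, ← hdd, div_eq_mul_inv, Real.rpow_mul (apply_nonneg w (a : K)),
      Real.rpow_natCast]
end

section
/- Let K be a totally complex number field with at least two archimedean places, let w be an archimedean place, and let ξ be a nonzero element of O_K with |ξ|_v < 1 for all archimedean places v ≠ w. If k = Q(ξ) is a proper subfield of K, then [K : k] = 2. -/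
open NumberField

/-- Lemma 2.2, first part: if $K$ is totally complex with at least two archimedean
places, $\xi\in O_K\setminus\{0\}$ with $|\xi|_v<1$ for all archimedean $v\ne w$, and
$k=\mathbb{Q}(\xi)$ is a proper subfield of $K$, then $[K:k]=2$. -/
theorem statement5 (K : Type*) [Field K] [NumberField K]
    (htc : ∀ v : InfinitePlace K, v.IsComplex)
    (hcard : 2 ≤ Fintype.card (InfinitePlace K))
    (w : InfinitePlace K) (ξ : 𝓞 K) (hξ : ξ ≠ 0)
    (hsmall : ∀ v : InfinitePlace K, v ≠ w → placeNorm v (ξ : K) < 1)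
    (hproper : IntermediateField.adjoin ℚ {(ξ : K)} ≠ ⊤) :
    Module.finrank (↥(IntermediateField.adjoin ℚ {(ξ : K)})) K = 2 := by
  classical
  set k := IntermediateField.adjoin ℚ {(ξ : K)} with hk
  -- converting the normalized smallness to plain smallness
  have hd : (0 : ℝ) < (Module.finrank ℚ K : ℝ) := by
    exact_mod_cast Module.finrank_pos
  have hsmall' : ∀ v : InfinitePlace K, v ≠ w → v (ξ : K) < 1 := by
    intro v hv
    have h := hsmall v hv
    have hm : (0 : ℝ) < (v.mult : ℝ) / (Module.finrank ℚ K : ℝ) := by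
      apply div_pos _ hd
      have : 0 < v.mult := NumberField.InfinitePlace.mult_pos
      exact_mod_cast this
    rw [placeNorm, Real.rpow_lt_one_iff' (apply_nonneg v _) hm] at h
    exact h
  have hwge : 1 ≤ w (ξ : K) :=
    NumberField.InfinitePlace.one_le_of_lt_one hξ (fun z hz => hsmall' z hz)
  -- ξ as an element of k
  have hmem : (ξ : K) ∈ k := IntermediateField.mem_adjoin_simple_self ℚ (ξ : K)
  set ξ' : k := ⟨(ξ : K), hmem⟩ with hξ'
  have halg : algebraMap k K ξ' = (ξ : K) := rfl
  -- the fiber of comap over u := w.comap is {w}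
  have hfiber : ∀ v : InfinitePlace K,
      v.comap (algebraMap k K) = w.comap (algebraMap k K) → v = w := by
    intro v hv
    by_contra hne
    have h1 : v (ξ : K) = w (ξ : K) := by
      have : (v.comap (algebraMap k K)) ξ' = (w.comap (algebraMap k K)) ξ' := by rw [hv]
      simpa [NumberField.InfinitePlace.comap_apply, halg] using this
    have := hsmall' v hne
    rw [h1] at this
    linarith
  -- set up ℂ as a k-algebra via the embedding of u := w.comap
  set u := w.comap (algebraMap k K) with hu
  letI : Algebra k ℂ := u.embedding.toAlgebra
  haveI : FiniteDimensional k K := FiniteDimensional.right ℚ k K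
  -- the number of k-algebra homs K →ₐ[k] ℂ equals [K : k]
  have hcardalg : Fintype.card (K →ₐ[k] ℂ) = Module.finrank k K := AlgHom.card k K ℂ
  -- each such hom gives an embedding φ with mk φ = w
  have key : ∀ ψ : K →ₐ[k] ℂ, NumberField.InfinitePlace.mk ψ.toRingHom = w := by
    intro ψ
    apply hfiber
    rw [NumberField.InfinitePlace.comap_mk]
    have hcomp : (ψ.toRingHom).comp (algebraMap k K) = u.embedding := by
      ext x; exact ψ.commutes x
    rw [hcomp, NumberField.InfinitePlace.mk_embedding, hu]
  -- hence [K : k] ≤ mult w = 2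
  have hle : Module.finrank k K ≤ 2 := by
    have hmult : w.mult = 2 := by
      rw [NumberField.InfinitePlace.mult,
        if_neg (NumberField.InfinitePlace.not_isReal_iff_isComplex.mpr (htc w))]
    have hinj : Function.Injective
        (fun ψ : (K →ₐ[k] ℂ) =>
          (⟨ψ.toRingHom, key ψ⟩ : {φ : K →+* ℂ // NumberField.InfinitePlace.mk φ = w})) := by
      intro a b h
      have : (a.toRingHom : K →+* ℂ) = b.toRingHom := congrArg Subtype.val h
      exact AlgHom.coe_ringHom_injective this
    have hcard2 : Fintype.card {φ : K →+* ℂ // NumberField.InfinitePlace.mk φ = w} = 2 := by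
      rw [Fintype.card_subtype, NumberField.InfinitePlace.card_filter_mk_eq, hmult]
    calc Module.finrank k K = Fintype.card (K →ₐ[k] ℂ) := hcardalg.symm
      _ ≤ Fintype.card {φ : K →+* ℂ // NumberField.InfinitePlace.mk φ = w} :=
          Fintype.card_le_of_injective _ hinj
      _ = 2 := hcard2
  -- [K : k] ≥ 2 since k is proper
  have hpos : 0 < Module.finrank k K := Module.finrank_pos
  have hne1 : Module.finrank k K ≠ 1 := by
    intro h1
    apply hproper
    have hbt : (⊥ : Subalgebra k K) = ⊤ :=
      Subalgebra.bot_eq_top_iff_finrank_eq_one.mpr h1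
    rw [eq_top_iff]
    intro x _
    have hx : x ∈ (⊥ : Subalgebra k K) := hbt ▸ Algebra.mem_top
    obtain ⟨y, hy⟩ := Algebra.mem_bot.mp hx
    have : algebraMap k K y = x := hy
    rw [← this]
    exact y.2
  omega
end

section
/- Let K be a totally complex number field with at least two archimedean places, let w be an archimedean place with associated embedding σ_w : K → C, and let ξ be a nonzero element of O_K with |ξ|_v < 1 for all archimedean places v ≠ w. If k = Q(ξ) is a proper subfield of K, then σ_w(k) ⊆ R and σ_w(k) = σ_w(K) ∩ R. -/
open NumberField

section Aux

open NumberField.InfinitePlace Complex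

variable {K : Type*} [Field K] [NumberField K]

/-- Any embedding of `K` agreeing with `σ_w` on a subfield containing `ξ` is `σ_w` or its
conjugate. -/
private lemma aux_mem_pair {w : InfinitePlace K} {ξ : 𝓞 K}
    (hwξ : 1 ≤ w (ξ : K)) (hlt : ∀ v : InfinitePlace K, v ≠ w → v (ξ : K) < 1)
    {F : IntermediateField ℚ K} (hmem : (ξ : K) ∈ F)
    (τ : K →+* ℂ) (hτ : ∀ x ∈ F, τ x = w.embedding x) :
    τ = w.embedding ∨ τ = ComplexEmbedding.conjugate w.embedding := by
  have habs : ‖w.embedding (ξ : K)‖ = w (ξ : K) := by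
    rw [norm_embedding_eq]
  have h1 : InfinitePlace.mk τ = w := by
    by_contra h
    have h2 := hlt _ h
    rw [InfinitePlace.apply, hτ _ hmem, habs] at h2
    linarith
  rw [← mk_embedding w, mk_eq_iff] at h1
  rcases h1 with h | h
  · exact Or.inl h
  · right
    rw [← h]
    ext x
    simp [ComplexEmbedding.conjugate_coe_eq]

/-- Counting embeddings extending a fixed embedding of a subfield bounds the relative degree. -/
private lemma aux_count (F : IntermediateField ℚ K) (emb : K →+* ℂ)
    (s : Finset (K →+* ℂ))
    (h : ∀ τ : K →+* ℂ, (∀ x ∈ F, τ x = emb x) → τ ∈ s) :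
    Module.finrank F K ≤ s.card := by
  letI : Algebra F ℂ := (emb.comp (algebraMap F K)).toAlgebra
  rw [← AlgHom.card F K ℂ]
  have key : ∀ τ : K →ₐ[F] ℂ, (τ : K →+* ℂ) ∈ s := by
    intro τ
    refine h _ (fun x hx => ?_)
    have hc := τ.commutes ⟨x, hx⟩
    simpa [RingHom.algebraMap_toAlgebra] using hc
  calc Fintype.card (K →ₐ[F] ℂ) = (Finset.univ : Finset (K →ₐ[F] ℂ)).card :=
        Finset.card_univ.symm
    _ ≤ s.card := Finset.card_le_card_of_injOn (fun τ => (τ : K →+* ℂ))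
        (fun τ _ => key τ)
        (fun τ₁ _ τ₂ _ hh => AlgHom.ext fun x => RingHom.congr_fun hh x)

private lemma aux_two_le (F : IntermediateField ℚ K) (hne : F ≠ ⊤) :
    2 ≤ Module.finrank F K := by
  by_contra hh
  push_neg at hh
  have h1 : Module.finrank F K ≤ 1 := by omega
  exact hne (IntermediateField.eq_of_le_of_finrank_le' le_top
    (by rw [IntermediateField.finrank_top]; exact h1))

end Aux

/-- Lemma 2.2, second part: with $K, w, \xi$ as before and $k=\mathbb{Q}(\xi)$ proper,
$\sigma_w(k)\subseteq\mathbb{R}$ and $\sigma_w(k)=\sigma_w(K)\cap\mathbb{R}$. -/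
theorem statement6 (K : Type*) [Field K] [NumberField K]
    (htc : ∀ v : InfinitePlace K, v.IsComplex)
    (hcard : 2 ≤ Fintype.card (InfinitePlace K))
    (w : InfinitePlace K) (ξ : 𝓞 K) (hξ : ξ ≠ 0)
    (hsmall : ∀ v : InfinitePlace K, v ≠ w → placeNorm v (ξ : K) < 1)
    (hproper : IntermediateField.adjoin ℚ {(ξ : K)} ≠ ⊤) :
    (w.embedding '' (IntermediateField.adjoin ℚ {(ξ : K)} : Set K) ⊆ {z : ℂ | z.im = 0}) ∧
    w.embedding '' (IntermediateField.adjoin ℚ {(ξ : K)} : Set K) =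
      Set.range w.embedding ∩ {z : ℂ | z.im = 0} := by
  classical
  set k : IntermediateField ℚ K := IntermediateField.adjoin ℚ {(ξ : K)} with hkdef
  have hmemk : (ξ : K) ∈ k := IntermediateField.mem_adjoin_simple_self ℚ (ξ : K)
  have hlt : ∀ v : InfinitePlace K, v ≠ w → v (ξ : K) < 1 := by
    intro v hv
    by_contra hcon
    push_neg at hcon
    have h1 : (1 : ℝ) ≤ placeNorm v (ξ : K) := by
      unfold placeNorm
      exact Real.one_le_rpow hcon (by positivity)
    exact absurd (hsmall v hv) (not_lt.mpr h1)
  have hwξ : 1 ≤ w (ξ : K) := InfinitePlace.one_le_of_lt_one hξ (fun z hz => hlt z hz)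
  have hconj_eq : ∀ (τ : K →+* ℂ), (∀ x ∈ k, τ x = w.embedding x) →
      τ = w.embedding ∨ τ = NumberField.ComplexEmbedding.conjugate w.embedding :=
    fun τ hτ => aux_mem_pair hwξ hlt hmemk τ hτ
  -- realness of σ_w(ξ)
  have hreal : (w.embedding (ξ : K)).im = 0 := by
    by_contra him
    have hs : Module.finrank k K ≤ ({w.embedding} : Finset (K →+* ℂ)).card := by
      apply aux_count k w.embedding
      intro τ hτ
      rcases hconj_eq τ hτ with h | h
      · simp [h]
      · exfalso
        apply him
        have h2 := hτ _ hmemk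
        rw [h, NumberField.ComplexEmbedding.conjugate_coe_eq] at h2
        exact Complex.conj_eq_iff_im.mp h2
    rw [Finset.card_singleton] at hs
    have := aux_two_le k hproper
    omega
  -- the real-preimage subfield E
  have hratmem : ∀ x : ℚ,
      algebraMap ℚ K x ∈ Subfield.comap w.embedding Complex.ofRealHom.fieldRange := by
    intro x
    rw [Subfield.mem_comap, RingHom.mem_fieldRange]
    refine ⟨(x : ℝ), ?_⟩
    have : w.embedding (algebraMap ℚ K x) = (x : ℂ) := by
      rw [show w.embedding (algebraMap ℚ K x) = (w.embedding.comp (algebraMap ℚ K)) x from rfl,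
        eq_ratCast]
    simp [this]
  set E : IntermediateField ℚ K :=
    Subfield.toIntermediateField (Subfield.comap w.embedding Complex.ofRealHom.fieldRange)
      hratmem with hEdef
  have hE : ∀ x : K, x ∈ E ↔ (w.embedding x).im = 0 := by
    intro x
    have hmemiff : x ∈ E ↔ ∃ r : ℝ, Complex.ofRealHom r = w.embedding x := Iff.rfl
    rw [hmemiff]
    constructor
    · rintro ⟨r, hr⟩
      rw [← hr]
      simp
    · intro h
      exact ⟨(w.embedding x).re, by apply Complex.ext <;> simp [h]⟩
  have hkle : k ≤ E := by
    rw [hkdef, IntermediateField.adjoin_le_iff]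
    intro x hx
    rcases Set.mem_singleton_iff.mp hx with rfl
    exact (hE _).mpr hreal
  have hEne : E ≠ ⊤ := by
    intro htop
    have hcw := htc w
    rw [NumberField.InfinitePlace.isComplex_iff] at hcw
    apply hcw
    rw [NumberField.ComplexEmbedding.isReal_iff]
    ext x
    rw [NumberField.ComplexEmbedding.conjugate_coe_eq, Complex.conj_eq_iff_im]
    exact (hE x).mp (by rw [htop]; trivial)
  have hk2 : Module.finrank k K ≤ 2 := by
    have hb := aux_count k w.embedding
      {w.embedding, NumberField.ComplexEmbedding.conjugate w.embedding}
      (fun τ hτ => by rcases hconj_eq τ hτ with h | h <;> simp [h])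
    refine hb.trans ?_
    exact (Finset.card_insert_le _ _).trans (by simp)
  have hE2 : 2 ≤ Module.finrank E K := aux_two_le E hEne
  have hkeqE : k = E := IntermediateField.eq_of_le_of_finrank_le' hkle (hk2.trans hE2)
  constructor
  · rintro z ⟨x, hx, rfl⟩
    exact (hE x).mp (hkle hx)
  · ext z
    constructor
    · rintro ⟨x, hx, rfl⟩
      exact ⟨⟨x, rfl⟩, (hE x).mp (hkle hx)⟩
    · rintro ⟨⟨x, rfl⟩, him⟩
      exact ⟨x, by rw [hkeqE]; exact (hE x).mpr him, rfl⟩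
end

section
/- Let K be a totally complex number field with at least two archimedean places, let w be an archimedean place with embedding σ_w, and let ξ ∈ O_K be nonzero with |ξ|_v < 1 for all archimedean v ≠ w. If k = Q(ξ) is a proper subfield of K, then K/k is a Galois extension of degree 2 and Aut(K/k) is generated by σ_w^{-1} ∘ ρ ∘ σ_w, where ρ is complex conjugation. -/
open NumberField

set_option maxHeartbeats 1000000 in
/-- Corollary 2.1: with $K, w, \xi$ as in Lemma 2.2 and $k=\mathbb{Q}(\xi)$ proper,
$K/k$ is Galois of degree $2$ and $\mathrm{Aut}(K/k)$ is generated by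
$\sigma_w^{-1}\rho\sigma_w$. -/
theorem statement7 (K : Type*) [Field K] [NumberField K]
    (htc : ∀ v : InfinitePlace K, v.IsComplex)
    (hcard : 2 ≤ Fintype.card (InfinitePlace K))
    (w : InfinitePlace K) (ξ : 𝓞 K) (hξ : ξ ≠ 0)
    (hsmall : ∀ v : InfinitePlace K, v ≠ w → placeNorm v (ξ : K) < 1)
    (hproper : IntermediateField.adjoin ℚ {(ξ : K)} ≠ ⊤) :
    IsGalois (↥(IntermediateField.adjoin ℚ {(ξ : K)})) K ∧
    Module.finrank (↥(IntermediateField.adjoin ℚ {(ξ : K)})) K = 2 ∧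
    ∃ g : K ≃ₐ[↥(IntermediateField.adjoin ℚ {(ξ : K)})] K,
      (∀ x : K, w.embedding (g x) = starRingEnd ℂ (w.embedding x)) ∧
      ∀ h : K ≃ₐ[↥(IntermediateField.adjoin ℚ {(ξ : K)})] K, h ∈ Subgroup.zpowers g := by
  classical
  set k := IntermediateField.adjoin ℚ {(ξ : K)} with hkdef
  have hξk : (ξ : K) ∈ k := IntermediateField.subset_adjoin ℚ _ rfl
  -- all other places are < 1 on ξ
  have hvlt : ∀ ⦃v : InfinitePlace K⦄, v ≠ w → v (ξ : K) < 1 := by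
    intro v hv
    by_contra hge
    push_neg at hge
    have hd : (0:ℝ) < (v.mult : ℝ) / (Module.finrank ℚ K : ℝ) := by
      apply div_pos
      · exact_mod_cast InfinitePlace.mult_pos
      · exact_mod_cast Module.finrank_pos
    have hs := hsmall v hv
    rw [placeNorm] at hs
    have h1 : (1:ℝ) ≤ (v (ξ:K)) ^ ((v.mult : ℝ) / (Module.finrank ℚ K : ℝ)) := by
      calc (1:ℝ) = 1 ^ ((v.mult : ℝ) / (Module.finrank ℚ K : ℝ)) := (Real.one_rpow _).symm
      _ ≤ _ := Real.rpow_le_rpow zero_le_one hge hd.le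
    linarith
  have hwξ : 1 ≤ w (ξ : K) := InfinitePlace.one_le_of_lt_one hξ hvlt
  -- classification of embeddings agreeing with σ_w on ξ
  have hcls : ∀ φ : K →+* ℂ, φ (ξ:K) = w.embedding (ξ:K) →
      φ = w.embedding ∨ φ = ComplexEmbedding.conjugate (w.embedding) := by
    intro φ hφ
    have hmk : InfinitePlace.mk φ = w := by
      by_contra h
      have h1 := hvlt h
      rw [InfinitePlace.apply, hφ] at h1
      rw [show ‖w.embedding (ξ:K)‖ = w (ξ:K) from w.norm_embedding_eq _] at h1
      linarith
    rw [← InfinitePlace.mk_embedding w, InfinitePlace.mk_eq_iff] at hmk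
    rcases hmk with h | h
    · exact Or.inl h
    · right
      rw [← h]
      exact (star_star φ).symm
  letI : Algebra ↥k ℂ := ((w.embedding).comp (algebraMap ↥k K)).toAlgebra
  haveI : FiniteDimensional ↥k K := FiniteDimensional.right ℚ ↥k K
  have key : ∀ φ : K →ₐ[↥k] ℂ, (φ : K →+* ℂ) = w.embedding ∨
      (φ : K →+* ℂ) = ComplexEmbedding.conjugate w.embedding := by
    intro φ
    apply hcls
    exact φ.commutes ⟨(ξ:K), hξk⟩
  have hcard2 : Fintype.card (K →ₐ[↥k] ℂ) = Module.finrank ↥k K :=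
    AlgHom.card (↥k) K ℂ
  -- finrank ≠ 1
  have hr1 : Module.finrank ↥k K ≠ 1 := by
    intro h1
    apply hproper
    have heq : Module.finrank ℚ ↥k = Module.finrank ℚ K := by
      have h := Module.finrank_mul_finrank ℚ ↥k K
      rw [h1, mul_one] at h
      exact h
    exact IntermediateField.eq_of_le_of_finrank_eq le_top
      (by rw [heq, IntermediateField.finrank_top'])
  -- finrank ≤ 2
  have hle2 : Fintype.card (K →ₐ[↥k] ℂ) ≤ 2 := by
    have hσne : ComplexEmbedding.conjugate w.embedding ≠ (w.embedding : K →+* ℂ) := by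
      intro hc
      exact (NumberField.InfinitePlace.isComplex_iff.mp (htc w))
        (NumberField.ComplexEmbedding.isReal_iff.mpr hc)
    have hinj : Function.Injective
        (fun φ : (K →ₐ[↥k] ℂ) => ((φ : K →+* ℂ) = w.embedding : Prop)) := by
      intro φ₁ φ₂ hEq
      have hiff : ((φ₁ : K →+* ℂ) = w.embedding) ↔ ((φ₂ : K →+* ℂ) = w.embedding) :=
        Eq.to_iff hEq
      have : (φ₁ : K →+* ℂ) = (φ₂ : K →+* ℂ) := by
        rcases key φ₁ with h1 | h1 <;> rcases key φ₂ with h2 | h2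
        · rw [h1, h2]
        · exact absurd (h2 ▸ hiff.mp h1) hσne
        · exact absurd (h1 ▸ hiff.mpr h2) hσne
        · rw [h1, h2]
      exact AlgHom.coe_ringHom_injective this
    calc Fintype.card (K →ₐ[↥k] ℂ) ≤ Fintype.card Prop := Fintype.card_le_of_injective _ hinj
    _ = 2 := Fintype.card_prop
  have hfin2 : Module.finrank ↥k K = 2 := by
    have hpos := Module.finrank_pos (R := ↥k) (M := K)
    omega
  -- primitive element and quadratic conjugate
  obtain ⟨θ, hθ⟩ := Field.exists_primitive_element ↥k K
  have hint : IsIntegral ↥k θ := IsIntegral.of_finite ↥k θ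
  have hpdeg : (minpoly ↥k θ).natDegree = 2 := by
    rw [(Field.primitive_element_iff_minpoly_natDegree_eq ↥k θ).mp hθ, hfin2]
  set c₁ : K := algebraMap ↥k K ((minpoly ↥k θ).coeff 1) with hc₁
  set θ' : K := -c₁ - θ with hθ'def
  have hm2 : (minpoly ↥k θ).coeff 2 = 1 := by
    have h := (minpoly.monic hint).coeff_natDegree
    rwa [hpdeg] at h
  have expand : ∀ x : K, Polynomial.aeval x (minpoly ↥k θ) =
      x^2 + c₁ * x + algebraMap ↥k K ((minpoly ↥k θ).coeff 0) := by
    intro x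
    rw [Polynomial.aeval_eq_sum_range, hpdeg]
    simp [Finset.sum_range_succ, Algebra.smul_def, hm2]
    rw [show (((minpoly (↥k) θ).coeff 1 : ↥k) : K) = c₁ from rfl]
    ring
  have hθeq : θ^2 + c₁ * θ + algebraMap ↥k K ((minpoly ↥k θ).coeff 0) = 0 := by
    rw [← expand]
    exact minpoly.aeval ↥k θ
  have hroot : Polynomial.aeval θ' (minpoly ↥k θ) = 0 := by
    rw [expand, hθ'def]
    linear_combination hθeq
  have hroots : θ' ∈ (minpoly ↥k θ).aroots K := by
    rw [Polynomial.mem_aroots]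
    exact ⟨minpoly.ne_zero hint, hroot⟩
  set ψθ :=
    (IntermediateField.algHomAdjoinIntegralEquiv (↥k) (K := K) hint).symm ⟨θ', hroots⟩ with hψθ
  set e := (IntermediateField.equivOfEq hθ).trans (IntermediateField.topEquiv (F := ↥k) (E := K))
    with he
  set g₀ : K →ₐ[↥k] K := ψθ.comp e.symm.toAlgHom with hg₀
  have hgen : e (IntermediateField.AdjoinSimple.gen ↥k θ) = θ := rfl
  have hg₀θ : g₀ θ = θ' := by
    have hsymm : e.symm θ = IntermediateField.AdjoinSimple.gen ↥k θ := by
      exact (e.symm_apply_eq).mpr hgen.symm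
    show ψθ (e.symm θ) = θ'
    rw [hsymm, hψθ]
    exact IntermediateField.algHomAdjoinIntegralEquiv_symm_apply_gen ↥k hint ⟨θ', hroots⟩
  set g : K ≃ₐ[↥k] K := AlgEquiv.ofBijective g₀ g₀.bijective with hg
  have hgθ : g θ = θ' := hg₀θ
  have hθ'ne : θ' ≠ θ := by
    intro hEq
    have h2θ : θ = algebraMap ↥k K (-((minpoly ↥k θ).coeff 1)/2) := by
      rw [map_div₀, map_neg, map_ofNat]
      rw [hθ'def] at hEq
      linear_combination (-1/2 : K) * hEq
    have hd1 : (minpoly ↥k θ).natDegree = 1 := by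
      rw [h2θ, minpoly.eq_X_sub_C]
      exact Polynomial.natDegree_X_sub_C _
    omega
  -- the σ algebra hom
  set σalg : K →ₐ[↥k] ℂ := { toRingHom := (w.embedding : K →+* ℂ), commutes' := fun r => rfl }
    with hσalg
  have hgconj : ∀ x : K, w.embedding (g x) = (starRingEnd ℂ) (w.embedding x) := by
    rcases key (σalg.comp g₀) with h | h
    · exfalso
      have hh : w.embedding (g₀ θ) = w.embedding θ := RingHom.congr_fun h θ
      have := w.embedding.injective hh
      rw [hg₀θ] at this
      exact hθ'ne this
    · intro x
      have hx := RingHom.congr_fun h x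
      exact hx
  have hg1 : g ≠ 1 := by
    intro hEq
    apply hθ'ne
    rw [← hgθ, hEq, AlgEquiv.one_apply]
  have hautinj : Function.Injective (fun h : K ≃ₐ[↥k] K => σalg.comp h.toAlgHom) := by
    intro h₁ h₂ hEq
    ext x
    exact w.embedding.injective (AlgHom.congr_fun hEq x)
  have hcardaut : Fintype.card (K ≃ₐ[↥k] K) = 2 := by
    have hle : Fintype.card (K ≃ₐ[↥k] K) ≤ 2 := by
      calc Fintype.card (K ≃ₐ[↥k] K) ≤ Fintype.card (K →ₐ[↥k] ℂ) :=
        Fintype.card_le_of_injective _ hautinj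
      _ ≤ 2 := hle2
    have hlt : 1 < Fintype.card (K ≃ₐ[↥k] K) := Fintype.one_lt_card_iff.mpr ⟨g, 1, hg1⟩
    omega
  have hgal : IsGalois ↥k K := IsGalois.of_card_aut_eq_finrank (↥k) K (by rw [Nat.card_eq_fintype_card, hcardaut, hfin2])
  refine ⟨hgal, hfin2, g, hgconj, ?_⟩
  intro h
  have htop : Subgroup.zpowers g = ⊤ := by
    rw [← Subgroup.card_eq_iff_eq_top, Nat.card_zpowers]
    have hdvd : orderOf g ∣ 2 := by
      have hd := orderOf_dvd_card (x := g)
      rwa [hcardaut] at hd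
    have hne1 : orderOf g ≠ 1 := fun h1 => hg1 (orderOf_eq_one_iff.mp h1)
    have hord : orderOf g = 2 := by
      rcases (Nat.dvd_prime Nat.prime_two).mp hdvd with h1 | h2
      · exact absurd h1 hne1
      · exact h2
    rw [hord, Nat.card_eq_fintype_card, hcardaut]
  rw [htop]
  exact Subgroup.mem_top h
end

section
/- Let K be a number field and μ an algebraic integer in O_K that is not totally real. Then there exists an algebraic integer α ∈ O_K such that K = Q(α) and H(α) ≤ H(μ) · c_K, where c_K = (2/π)^{s/d}|Δ_K|^{1/(2d)}. -/
open NumberField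

open NumberField.InfinitePlace Module in
private theorem prod_max_eq_statement10 {K : Type*} [Field K] [NumberField K] (x : K) :
    ∏ φ : K →+* ℂ, max 1 ‖φ x‖ =
      ∏ w : InfinitePlace K, max 1 (w x) ^ mult w := by
  classical
  rw [← Finset.prod_fiberwise Finset.univ InfinitePlace.mk
    (fun φ : K →+* ℂ => max 1 ‖φ x‖)]
  refine Finset.prod_congr rfl fun w _ => ?_
  have h (φ : K →+* ℂ) (hφ : φ ∈ ({φ | InfinitePlace.mk φ = w} : Finset _)) :
      max 1 ‖φ x‖ = max 1 (w x) := by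
    rw [← (Finset.mem_filter.mp hφ).2, InfinitePlace.apply]
  rw [Finset.prod_congr rfl h, Finset.prod_const, card_filter_mk_eq]

open NumberField.InfinitePlace in
open scoped IntermediateField in
private theorem primitive_statement10 {K : Type*} [Field K] [NumberField K]
    {x : K} {w : InfinitePlace K}
    (h₂ : ∀ w' : InfinitePlace K, w' ≠ w → w' x < w x)
    (him : ((embedding w) x).im ≠ 0) :
    IntermediateField.adjoin ℚ {x} = ⊤ := by
  rw [show IntermediateField.adjoin ℚ {x} = ℚ⟮x⟯ from rfl]
  rw [Field.primitive_element_iff_algHom_eq_of_eval ℚ ℂ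
    (fun a => IsAlgClosed.splits _) _ (embedding w).toRatAlgHom]
  intro ψ hψ
  have hψ' : (embedding w) x = ψ x := hψ
  have hmk : w = InfinitePlace.mk ψ.toRingHom := by
    by_contra hne
    have h1 := h₂ _ (fun h => hne h.symm)
    have h2 : (InfinitePlace.mk ψ.toRingHom) x = w x := by
      rw [InfinitePlace.apply]
      show ‖ψ x‖ = w x
      rw [← hψ', norm_embedding_eq]
    exact absurd h2 (ne_of_lt h1)
  rw [← mk_embedding w, mk_eq_iff] at hmk
  cases hmk with
  | inl h => exact congr_arg RingHom.toRatAlgHom h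
  | inr h =>
    exfalso
    have h3 : ComplexEmbedding.conjugate (embedding w) x = ψ x := RingHom.congr_fun h x
    rw [ComplexEmbedding.conjugate_coe_eq, ← hψ'] at h3
    exact him (Complex.conj_eq_iff_im.mp h3)

open scoped NNReal ENNReal in
open NumberField.InfinitePlace in
set_option maxHeartbeats 1000000 in
/-- Theorem 1.2: if $\mu\in O_K$ is not totally real, then there is $\alpha\in O_K$
with $K=\mathbb{Q}(\alpha)$ and $H(\alpha)\le H(\mu)c_K$. -/
theorem statement10 (K : Type*) [Field K] [NumberField K]
    (μ : 𝓞 K) (hμ : ∃ φ : K →+* ℂ, (φ (μ : K)).im ≠ 0) :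
    ∃ α : 𝓞 K, IntermediateField.adjoin ℚ {(α : K)} = ⊤ ∧
      intHeight (α : K) ≤ intHeight (μ : K) * minkowskiConst K := by
  classical
  obtain ⟨φ₀, him⟩ := hμ
  have hμK : (μ : K) ≠ 0 := by
    intro h
    apply him
    rw [h, map_zero]
    rfl
  have hμ0 : μ ≠ 0 := by
    intro h
    exact hμK (by rw [h]; rfl)
  set w₀ : InfinitePlace K := InfinitePlace.mk φ₀ with hw₀def
  have hφ₀nr : ¬ ComplexEmbedding.IsReal φ₀ := by
    intro hre
    have h1 := RingHom.congr_fun (ComplexEmbedding.isReal_iff.mp hre) (μ : K)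
    rw [ComplexEmbedding.conjugate_coe_eq] at h1
    exact him (Complex.conj_eq_iff_im.mp h1)
  have hw₀c : w₀.IsComplex := ⟨φ₀, hφ₀nr, rfl⟩
  have hw₀nr : ¬ w₀.IsReal := not_isReal_iff_isComplex.mpr hw₀c
  have hmult₀ : w₀.mult = 2 := by
    simp only [InfinitePlace.mult, hw₀nr, if_false]
  have him₀ : ((embedding w₀) (μ : K)).im ≠ 0 := by
    rcases embedding_mk_eq φ₀ with h | h
    · rw [hw₀def, h]; exact him
    · rw [hw₀def, h, ComplexEmbedding.conjugate_coe_eq]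
      simpa using him
  -- numerical data
  set d : ℕ := Module.finrank ℚ K with hdd
  set r : ℕ := nrRealPlaces K with hrr
  set s : ℕ := nrComplexPlaces K with hss
  have hds : r + 2 * s = d := card_add_two_mul_card_eq_rank K
  have hd0 : 0 < d := Module.finrank_pos
  set m : InfinitePlace K → ℝ := fun w => max 1 (w (μ : K)) with hm
  have hm1 : ∀ w, 1 ≤ m w := fun w => le_max_left _ _
  have hm0 : ∀ w, 0 < m w := fun w => lt_of_lt_of_le one_pos (hm1 w)
  have hm2 : ∀ w, w (μ : K) ≤ m w := fun w => le_max_right _ _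
  set Hd : ℝ := ∏ w : InfinitePlace K, m w ^ w.mult with hHd
  have hHd1 : (1:ℝ) ≤ Hd := by
    rw [hHd]
    calc (1:ℝ) = ∏ _w : InfinitePlace K, 1 := by simp
      _ ≤ ∏ w : InfinitePlace K, m w ^ w.mult :=
          Finset.prod_le_prod (fun _ _ => zero_le_one) (fun w _ => one_le_pow₀ (hm1 w))
  have hHd0 : (0:ℝ) < Hd := lt_of_lt_of_le one_pos hHd1
  set M₀ : ℝ := m w₀ with hM₀
  have hM₀1 : (1:ℝ) ≤ M₀ := hm1 w₀
  have hM₀0 : (0:ℝ) < M₀ := hm0 w₀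
  -- NNReal data
  set g : InfinitePlace K → ℝ≥0 := fun w => ((m w).toNNReal)⁻¹ with hg
  have hgcoe : ∀ w, ((g w : ℝ)) = (m w)⁻¹ := by
    intro w
    rw [hg]
    push_cast
    rw [Real.coe_toNNReal _ (le_of_lt (hm0 w))]
  have hg0 : ∀ w, g w ≠ 0 := by
    intro w
    rw [hg]
    simp only [ne_eq, inv_eq_zero]
    exact (Real.toNNReal_pos.mpr (hm0 w)).ne'
  have hg1 : ∀ w, g w ≤ 1 := by
    intro w
    rw [← NNReal.coe_le_coe, hgcoe w, NNReal.coe_one]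
    rw [inv_le_one_iff₀]
    right
    exact hm1 w
  set Q : ℝ≥0 := ∏ w ∈ Finset.univ.erase w₀, g w ^ w.mult with hQ
  have hQ0 : Q ≠ 0 := by
    rw [hQ, Finset.prod_ne_zero_iff]
    exact fun w _ => pow_ne_zero _ (hg0 w)
  set F : ℝ≥0 := mixedEmbedding.convexBodyLTFactor K with hF
  have hF0 : F ≠ 0 := mixedEmbedding.convexBodyLTFactor_ne_zero K
  set mB : ℝ≥0 := (mixedEmbedding.minkowskiBound K 1).toNNReal with hmB
  have hmBne : mixedEmbedding.minkowskiBound K 1 ≠ ⊤ :=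
    (mixedEmbedding.minkowskiBound_lt_top K 1).ne
  have hmBcoe : (mB : ℝ≥0∞) = mixedEmbedding.minkowskiBound K 1 := ENNReal.coe_toNNReal hmBne
  have hmB0 : 0 < mB := by
    rw [hmB]
    exact ENNReal.toNNReal_pos (mixedEmbedding.minkowskiBound_pos K 1).ne' hmBne
  clear_value mB
  set R : ℕ → ℝ≥0 := fun n => NNReal.sqrt ((1 + ((n : ℝ≥0) + 1)⁻¹) * mB / (F * Q)) with hR
  set f : ℕ → InfinitePlace K → ℝ≥0 := fun n w => if w = w₀ then R n else g w with hfdef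
  -- Minkowski gives a sequence of candidates
  have hex : ∀ n : ℕ, ∃ a : 𝓞 K, a ≠ 0 ∧ ∀ w : InfinitePlace K, w (a : K) < f n w := by
    intro n
    have hvol : mixedEmbedding.minkowskiBound K 1 <
        MeasureTheory.volume (mixedEmbedding.convexBodyLT K (f n)) := by
      rw [mixedEmbedding.convexBodyLT_volume, ← hmBcoe]
      have hprodnn : F * ∏ w : InfinitePlace K, (f n w) ^ w.mult
          = (1 + ((n : ℝ≥0) + 1)⁻¹) * mB := by
        rw [← Finset.prod_erase_mul _ _ (Finset.mem_univ w₀)]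
        have h1 : ∏ w ∈ Finset.univ.erase w₀, (f n w) ^ w.mult = Q := by
          rw [hQ]
          refine Finset.prod_congr rfl fun w hw => ?_
          rw [hfdef]
          simp only [if_neg (Finset.ne_of_mem_erase hw)]
        have h2 : f n w₀ = R n := by simp [hfdef]
        rw [h1, h2, hmult₀, hR]
        simp only [NNReal.sq_sqrt]
        rw [div_eq_mul_inv]
        rw [show F * (Q * ((1 + ((n : ℝ≥0) + 1)⁻¹) * mB * (F * Q)⁻¹))
            = (1 + ((n : ℝ≥0) + 1)⁻¹) * mB * ((F * Q) * (F * Q)⁻¹) by ring]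
        rw [mul_inv_cancel₀ (mul_ne_zero hF0 hQ0), mul_one]
      rw [hF] at hprodnn
      rw [← ENNReal.coe_mul, ENNReal.coe_lt_coe, hprodnn]
      calc mB = 1 * mB := (one_mul mB).symm
        _ < (1 + ((n : ℝ≥0) + 1)⁻¹) * mB := by
            refine mul_lt_mul_of_pos_right ?_ hmB0
            refine lt_add_of_pos_right 1 ?_
            rw [pos_iff_ne_zero]
            exact inv_ne_zero (by positivity)
    exact mixedEmbedding.exists_ne_zero_mem_ringOfIntegers_lt K hvol
  choose αs hαne hαlt using hex
  -- pigeonhole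
  set C : ℝ := max 1 ((NNReal.sqrt (2 * mB / (F * Q)) : ℝ)) with hC
  have hRle : ∀ n, (R n : ℝ) ≤ (NNReal.sqrt (2 * mB / (F * Q)) : ℝ) := by
    intro n
    rw [NNReal.coe_le_coe]
    simp only [hR]
    refine NNReal.sqrt_le_sqrt.mpr ?_
    rw [div_eq_mul_inv, div_eq_mul_inv]
    refine mul_le_mul_left (mul_le_mul_left ?_ mB) _
    have h1 : ((n : ℝ≥0) + 1)⁻¹ ≤ 1 := by
      rw [inv_le_one_iff₀]
      right
      exact le_add_self
    calc 1 + ((n : ℝ≥0) + 1)⁻¹ ≤ 1 + 1 := add_le_add_right h1 1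
      _ = 2 := one_add_one_eq_two
  have hmem : ∀ n, (αs n : K) ∈ {x : K | IsIntegral ℤ x ∧ ∀ φ : K →+* ℂ, ‖φ x‖ ≤ C} := by
    intro n
    refine ⟨(αs n).isIntegral_coe, fun φ => ?_⟩
    have h1 : (InfinitePlace.mk φ) ((αs n : K)) < (f n (InfinitePlace.mk φ) : ℝ) := hαlt n _
    have h2 : ‖φ (αs n : K)‖ = (InfinitePlace.mk φ) ((αs n : K)) := rfl
    rw [h2]
    refine le_trans (le_of_lt h1) ?_
    rw [hfdef]
    simp only
    split_ifs with h
    · exact le_trans (hRle n) (le_max_right _ _)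
    · refine le_trans ?_ (le_max_left _ _)
      exact_mod_cast hg1 _
  have hfin : {x : K | IsIntegral ℤ x ∧ ∀ φ : K →+* ℂ, ‖φ x‖ ≤ C}.Finite :=
    NumberField.Embeddings.finite_of_norm_le K ℂ C
  haveI : Finite ↥{x : K | IsIntegral ℤ x ∧ ∀ φ : K →+* ℂ, ‖φ x‖ ≤ C} := hfin.to_subtype
  set Fn : ℕ → ↥{x : K | IsIntegral ℤ x ∧ ∀ φ : K →+* ℂ, ‖φ x‖ ≤ C} :=
    fun n => ⟨αs n, hmem n⟩ with hFn
  obtain ⟨y, hy⟩ := Finite.exists_infinite_fiber Fn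
  have hyinf : (Fn ⁻¹' {y}).Infinite := Set.infinite_coe_iff.mp hy
  obtain ⟨n₀, hn₀⟩ := hyinf.nonempty
  set a : 𝓞 K := αs n₀ with ha
  have hval : ∀ n ∈ Fn ⁻¹' {y}, (αs n : K) = (a : K) := by
    intro n hn
    have e1 : Fn n = y := hn
    have e2 : Fn n₀ = y := hn₀
    have e3 : (Fn n).val = (Fn n₀).val := congrArg Subtype.val (e1.trans e2.symm)
    exact e3
  have ha0 : a ≠ 0 := hαne n₀
  have haK0 : (a : K) ≠ 0 := RingOfIntegers.coe_ne_zero_iff.mpr ha0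
  have halt : ∀ w : InfinitePlace K, w ≠ w₀ → w (a : K) < ((g w : ℝ)) := by
    intro w hw
    have h1 := hαlt n₀ w
    rw [hfdef] at h1
    simp only [if_neg hw] at h1
    exact h1
  have haltone : ∀ w : InfinitePlace K, w ≠ w₀ → w (a : K) < 1 := by
    intro w hw
    refine lt_of_lt_of_le (halt w hw) ?_
    exact_mod_cast hg1 w
  have h1a : (1:ℝ) ≤ w₀ (a : K) := one_le_of_lt_one ha0 (fun z hz => haltone z hz)
  -- the limit bound at w₀
  set T₀ : ℝ := (mB : ℝ) / ((F : ℝ) * (Q : ℝ)) with hT₀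
  clear_value T₀
  have hF0' : (0:ℝ) < (F : ℝ) := by positivity
  have hQ0' : (0:ℝ) < (Q : ℝ) := by
    rw [NNReal.coe_pos]
    exact zero_lt_iff.mpr hQ0
  have hFQ0 : (0:ℝ) < (F : ℝ) * (Q : ℝ) := mul_pos hF0' hQ0'
  have hT₀0 : 0 < T₀ := by
    rw [hT₀]
    exact div_pos (by exact_mod_cast hmB0) hFQ0
  have hfw₀ : ∀ n, f n w₀ = R n := fun n => by simp [hfdef]
  have hsup : (w₀ (a : K))^2 ≤ T₀ := by
    by_contra hcon
    push_neg at hcon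
    set δ : ℝ := (w₀ (a : K))^2 - T₀ with hδ
    clear_value δ
    have hδ0 : 0 < δ := by rw [hδ]; linarith
    obtain ⟨N, hN⟩ := exists_nat_gt (T₀ / δ)
    have hbig : ∃ n ∈ Fn ⁻¹' {y}, N < n := by
      by_contra hcon2
      push_neg at hcon2
      exact hyinf (Set.Finite.subset (Set.finite_Iic N) (fun n hn => hcon2 n hn))
    obtain ⟨n, hnfib, hnN⟩ := hbig
    have h1 : w₀ (a : K) < (R n : ℝ) := by
      have h2 := hαlt n w₀
      rw [hfw₀ n] at h2
      rw [hval n hnfib] at h2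
      exact h2
    have h3 : (w₀ (a : K))^2 < ((R n : ℝ))^2 :=
      pow_lt_pow_left₀ h1 (apply_nonneg w₀ _) (two_ne_zero)
    have h4 : ((R n : ℝ))^2 = (1 + ((n : ℝ) + 1)⁻¹) * T₀ := by
      simp only [hR]
      rw [← NNReal.coe_pow, NNReal.sq_sqrt]
      push_cast
      rw [hT₀]
      ring
    have h6 : T₀ * ((n : ℝ) + 1)⁻¹ ≤ δ := by
      rw [← div_eq_mul_inv, div_le_iff₀ (by positivity)]
      rw [div_lt_iff₀ hδ0] at hN
      have h8 : (N : ℝ) ≤ (n : ℝ) + 1 := by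
        have h9 : (N : ℝ) ≤ (n : ℝ) := Nat.cast_le.mpr (le_of_lt hnN)
        linarith
      calc T₀ ≤ (N : ℝ) * δ := le_of_lt hN
        _ ≤ ((n : ℝ) + 1) * δ := mul_le_mul_of_nonneg_right h8 hδ0.le
        _ = δ * ((n : ℝ) + 1) := mul_comm _ _
    rw [h4] at h3
    have hδeq : δ = (w₀ (a : K))^2 - T₀ := hδ
    have h10 : (1 + ((n : ℝ) + 1)⁻¹) * T₀ = T₀ + T₀ * ((n : ℝ) + 1)⁻¹ := by ring
    linarith [h3, h6]
  -- the exact value of the Minkowski bound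
  have hENN : mixedEmbedding.minkowskiBound K 1 =
      ((((2:ℝ≥0))⁻¹ ^ s * NNReal.sqrt ‖discr K‖₊ * 2 ^ d : ℝ≥0) : ℝ≥0∞) := by
    rw [mixedEmbedding.minkowskiBound,
      mixedEmbedding.volume_fundamentalDomain_fractionalIdealLatticeBasis,
      mixedEmbedding.volume_fundamentalDomain_latticeBasis,
      mixedEmbedding.finrank]
    simp only [Units.val_one, FractionalIdeal.absNorm_one, Rat.cast_one,
      ENNReal.ofReal_one, one_mul]
    push_cast
    rfl
  have hmBr : (mB : ℝ) = (2:ℝ)⁻¹ ^ s * Real.sqrt |(discr K : ℝ)| * 2 ^ d := by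
    rw [hmB, hENN, ENNReal.toNNReal_coe]
    push_cast
    rfl
  have hQr : (Q : ℝ) = M₀^2 / Hd := by
    have hP0 : (0:ℝ) < ∏ w ∈ Finset.univ.erase w₀, m w ^ w.mult :=
      Finset.prod_pos fun w _ => pow_pos (hm0 w) _
    have h1 : (Q : ℝ) = (∏ w ∈ Finset.univ.erase w₀, m w ^ w.mult)⁻¹ := by
      rw [hQ]
      push_cast
      rw [← Finset.prod_inv_distrib]
      refine Finset.prod_congr rfl fun w hw => ?_
      rw [hgcoe w]
      exact inv_pow _ _
    have h2 : Hd = (∏ w ∈ Finset.univ.erase w₀, m w ^ w.mult) * M₀^2 := by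
      rw [hHd, ← Finset.prod_erase_mul _ _ (Finset.mem_univ w₀), hmult₀, hM₀]
    rw [h1, h2]
    field_simp
  set cKd : ℝ := (2 / Real.pi)^s * Real.sqrt |(discr K : ℝ)| with hcKd
  have hπ0 : (0:ℝ) < Real.pi := Real.pi_pos
  have hcKdnn : 0 ≤ cKd := by rw [hcKd]; positivity
  have hFr : (F : ℝ) = 2^r * Real.pi^s := by
    have h1 : F = (2:ℝ≥0)^r * NNReal.pi^s := rfl
    rw [h1]
    push_cast [NNReal.coe_real_pi]
    ring
  have hM₀ne : M₀ ≠ 0 := hM₀0.ne'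
  have hHdne : Hd ≠ 0 := hHd0.ne'
  have hT₀cKd : T₀ = cKd * Hd / M₀^2 := by
    have h2d : (2:ℝ)^d = 2^r * ((2:ℝ)^s)^2 := by
      rw [← hds, pow_add, pow_mul']
    rw [hT₀, hmBr, hFr, hQr, hcKd, h2d, div_pow]
    field_simp
    ring_nf
    rw [mul_assoc, ← mul_pow]
    norm_num
  -- conversion to `intHeight`
  have key : ∀ β : 𝓞 K, (∏ φ : K →+* ℂ, max 1 ‖φ (β : K)‖) ≤ cKd * Hd →
      intHeight (β : K) ≤ intHeight (μ : K) * minkowskiConst K := by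
    intro β hβ
    have hprodnn : (0:ℝ) ≤ ∏ φ : K →+* ℂ, max 1 ‖φ (β : K)‖ :=
      Finset.prod_nonneg fun φ _ => le_trans zero_le_one (le_max_left _ _)
    have hHdprod : intHeight (μ : K) = Hd ^ ((d:ℝ)⁻¹) := by
      rw [intHeight, prod_max_eq_statement10, ← hdd, ← hHd]
    have hmc : minkowskiConst K = cKd ^ ((d:ℝ)⁻¹) := by
      rw [minkowskiConst, hcKd]
      rw [Real.mul_rpow (by positivity) (Real.sqrt_nonneg _)]
      congr 1
      · rw [← Real.rpow_natCast (2 / Real.pi) s, ← Real.rpow_mul (by positivity)]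
        rw [← hdd, ← hss]
        congr 1
      · rw [Real.sqrt_eq_rpow, ← Real.rpow_mul (abs_nonneg _), ← hdd]
        congr 1
        rw [one_div, one_div, mul_inv]
    have hd0' : (0:ℝ) ≤ (d:ℝ)⁻¹ := by positivity
    rw [intHeight, ← hdd, hHdprod, hmc]
    rw [← Real.mul_rpow (le_trans zero_le_one hHd1) hcKdnn]
    exact Real.rpow_le_rpow hprodnn (hβ.trans (le_of_eq (mul_comm _ _))) hd0'
  -- case analysis
  by_cases hcase : ((embedding w₀) (a : K)).im = 0
  · -- multiply by μ
    set β : 𝓞 K := a * μ with hβdef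
    have hβK : (β : K) = (a : K) * (μ : K) := by
      rw [hβdef]
      push_cast
      rfl
    have hβ0 : β ≠ 0 := mul_ne_zero ha0 hμ0
    have hβlt1 : ∀ w : InfinitePlace K, w ≠ w₀ → w (β : K) < 1 := by
      intro w hw
      rw [hβK, map_mul]
      have h1 : w (a : K) * w (μ : K) ≤ (g w : ℝ) * w (μ : K) :=
        mul_le_mul_of_nonneg_right (le_of_lt (halt w hw)) (apply_nonneg w _)
      have h1' : w (a : K) * w (μ : K) < (g w : ℝ) * w (μ : K) :=
        mul_lt_mul_of_pos_right (halt w hw) (pos_iff.mpr hμK)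
      refine lt_of_lt_of_le h1' ?_
      rw [hgcoe w]
      rw [inv_mul_le_iff₀ (hm0 w), mul_one]
      exact hm2 w
    have h1β : (1:ℝ) ≤ w₀ (β : K) := one_le_of_lt_one hβ0 (fun z hz => hβlt1 z hz)
    have hdom : ∀ w' : InfinitePlace K, w' ≠ w₀ → w' (β : K) < w₀ (β : K) :=
      fun w' hw' => lt_of_lt_of_le (hβlt1 w' hw') h1β
    have himβ : ((embedding w₀) (β : K)).im ≠ 0 := by
      rw [hβK, map_mul, Complex.mul_im, hcase, zero_mul, add_zero]
      refine mul_ne_zero ?_ him₀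
      intro hre
      have hzero : (embedding w₀) (a : K) = 0 := Complex.ext hre hcase
      have hnorm := norm_embedding_eq w₀ (a : K)
      rw [hzero, norm_zero] at hnorm
      rw [← hnorm] at h1a
      norm_num at h1a
    refine ⟨β, primitive_statement10 hdom himβ, key β ?_⟩
    rw [prod_max_eq_statement10, ← Finset.prod_erase_mul _ _ (Finset.mem_univ w₀), hmult₀]
    have hprod1 : ∏ w ∈ Finset.univ.erase w₀, max 1 (w (β : K)) ^ w.mult = 1 :=
      Finset.prod_eq_one fun w hw => by
        rw [max_eq_left (le_of_lt (hβlt1 w (Finset.ne_of_mem_erase hw))), one_pow]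
    rw [hprod1, one_mul, max_eq_right h1β]
    rw [hβK, map_mul, mul_pow]
    calc (w₀ (a : K))^2 * (w₀ (μ : K))^2 ≤ T₀ * M₀^2 := by
          refine mul_le_mul hsup ?_ (by positivity) (le_of_lt hT₀0)
          rw [hM₀]
          exact pow_le_pow_left₀ (apply_nonneg _ _) (hm2 w₀) 2
      _ = cKd * Hd / M₀^2 * M₀^2 := by rw [hT₀cKd]
      _ = cKd * Hd := by field_simp
  · -- use a itself
    have hdom : ∀ w' : InfinitePlace K, w' ≠ w₀ → w' (a : K) < w₀ (a : K) :=
      fun w' hw' => lt_of_lt_of_le (haltone w' hw') h1a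
    refine ⟨a, primitive_statement10 hdom hcase, key a ?_⟩
    rw [prod_max_eq_statement10, ← Finset.prod_erase_mul _ _ (Finset.mem_univ w₀), hmult₀]
    have hprod1 : ∏ w ∈ Finset.univ.erase w₀, max 1 (w (a : K)) ^ w.mult = 1 :=
      Finset.prod_eq_one fun w hw => by
        rw [max_eq_left (le_of_lt (haltone w (Finset.ne_of_mem_erase hw))), one_pow]
    rw [hprod1, one_mul, max_eq_right h1a]
    calc (w₀ (a : K))^2 ≤ T₀ := hsup
      _ ≤ cKd * Hd / M₀^2 := le_of_eq hT₀cKd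
      _ ≤ cKd * Hd := by
          refine div_le_self ?_ ?_
          · exact mul_nonneg hcKdnn (le_trans zero_le_one hHd1)
          · exact one_le_pow₀ hM₀1
end

section
/- Let K be a number field with Tor(K^×) ≠ {±1}, i.e., K contains a root of unity other than ±1. Then there exists an algebraic integer α ∈ O_K such that K = Q(α) and H(α) ≤ c_K = (2/π)^{s/d}|Δ_K|^{1/(2d)}. -/
open NumberField

open NumberField.InfinitePlace NumberField.mixedEmbedding Module
open scoped IntermediateField NNReal ENNReal

section VaalerWidmer

variable {K : Type*} [Field K] [NumberField K]

theorem aux_prim {x : 𝓞 K} {w : InfinitePlace K}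
    (h₁ : x ≠ 0) (h₂ : ∀ ⦃w'⦄, w' ≠ w → w' (x : K) < 1)
    (h₃ : ((embedding w) (x : K)).im ≠ 0) : ℚ⟮(x : K)⟯ = ⊤ := by
  rw [Field.primitive_element_iff_algHom_eq_of_eval ℚ ℂ
    (fun x ↦ IsAlgClosed.splits _) _ (embedding w).toRatAlgHom]
  intro ψ hψ
  have h : 1 ≤ w (x : K) := one_le_of_lt_one h₁ h₂
  have main : w = InfinitePlace.mk ψ.toRingHom := by
    erw [← norm_embedding_eq, hψ] at h
    contrapose! h
    exact h₂ h.symm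
  rw [(mk_embedding w).symm, mk_eq_iff] at main
  refine congr_arg RingHom.toRatAlgHom (main.resolve_right fun h' ↦ h₃ ?_)
  erw [← Complex.conj_eq_iff_im, RingHom.congr_fun h' (x : K)]
  exact hψ.symm

theorem aux_mink (w₀ : InfinitePlace K) (hw₀ : IsComplex w₀)
    (hr : nrRealPlaces K = 0) (C : ℝ≥0)
    (hC : (2 / Real.pi) ^ nrComplexPlaces K * Real.sqrt |(discr K : ℝ)| < (C : ℝ) ^ 2) :
    ∃ α : 𝓞 K, α ≠ 0 ∧ (∀ ⦃w : InfinitePlace K⦄, w ≠ w₀ → w (α : K) < 1) ∧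
      w₀ (α : K) < C := by
  classical
  have hkey : (NNReal.sqrt ‖discr K‖₊ * 2 ^ nrComplexPlaces K : ℝ≥0)
      < (NNReal.pi ^ nrComplexPlaces K * C ^ 2 : ℝ≥0) := by
    rw [← NNReal.coe_lt_coe]
    push_cast
    have hπ : (0 : ℝ) < Real.pi := Real.pi_pos
    have h2 : Real.pi ^ nrComplexPlaces K * (2 / Real.pi) ^ nrComplexPlaces K
        = 2 ^ nrComplexPlaces K := by
      rw [← mul_pow]; congr 1; field_simp
    rw [NNReal.coe_real_pi, Int.norm_eq_abs]
    calc Real.sqrt |(discr K : ℝ)| * 2 ^ nrComplexPlaces K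
        = Real.pi ^ nrComplexPlaces K *
            ((2 / Real.pi) ^ nrComplexPlaces K * Real.sqrt |(discr K : ℝ)|) := by
          rw [← mul_assoc, h2, mul_comm]
      _ < Real.pi ^ nrComplexPlaces K * (C : ℝ) ^ 2 :=
          mul_lt_mul_of_pos_left hC (pow_pos hπ _)
  have hvol : minkowskiBound K ↑1 <
      MeasureTheory.volume (convexBodyLT K fun w => if w = w₀ then C else 1) := by
    have hmult : mult w₀ = 2 := by
      simp [mult, not_isReal_iff_isComplex.mpr hw₀]
    have hd : finrank ℚ K = 2 * nrComplexPlaces K := by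
      rw [← card_add_two_mul_card_eq_rank, hr, zero_add]
    rw [convexBodyLT_volume, minkowskiBound, volume_fundamentalDomain_fractionalIdealLatticeBasis,
      Units.val_one, FractionalIdeal.absNorm_one, Rat.cast_one, ENNReal.ofReal_one, one_mul,
      mixedEmbedding.finrank, volume_fundamentalDomain_latticeBasis]
    have hprod : ∏ w : InfinitePlace K,
        (if w = w₀ then C else 1 : ℝ≥0) ^ mult w = (C : ℝ≥0) ^ 2 := by
      have h1 : ∀ w ∈ Finset.univ.erase w₀,
          (if w = w₀ then C else 1 : ℝ≥0) ^ mult w = 1 := by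
        intro w hw
        rw [if_neg (Finset.ne_of_mem_erase hw)]
        simp
      rw [← Finset.prod_erase_mul _ _ (Finset.mem_univ w₀), Finset.prod_congr rfl h1,
        Finset.prod_const_one, one_mul, if_pos rfl, hmult]
    rw [hprod, hd]
    have e1 : (2 : ℝ≥0∞)⁻¹ ^ nrComplexPlaces K * (NNReal.sqrt ‖discr K‖₊ : ℝ≥0∞) *
        2 ^ (2 * nrComplexPlaces K)
        = ((NNReal.sqrt ‖discr K‖₊ * 2 ^ nrComplexPlaces K : ℝ≥0) : ℝ≥0∞) := by
      have h22 : (2 : ℝ≥0∞) ^ 2 * 2⁻¹ = 2 := by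
        rw [pow_two, mul_assoc, ENNReal.mul_inv_cancel two_ne_zero ENNReal.ofNat_ne_top, mul_one]
      rw [pow_mul, mul_comm, ← mul_assoc, ← mul_pow, h22]
      push_cast
      ring
    rw [e1]
    calc ((NNReal.sqrt ‖discr K‖₊ * 2 ^ nrComplexPlaces K : ℝ≥0) : ℝ≥0∞)
        < ((NNReal.pi ^ nrComplexPlaces K * C ^ 2 : ℝ≥0) : ℝ≥0∞) := ENNReal.coe_lt_coe.mpr hkey
      _ = (convexBodyLTFactor K : ℝ≥0∞) * (C : ℝ≥0∞) ^ 2 := by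
          rw [convexBodyLTFactor, hr]
          push_cast
          ring
  obtain ⟨a, h0, hlt⟩ := exists_ne_zero_mem_ringOfIntegers_lt (K := K)
    (f := fun w => if w = w₀ then C else 1) hvol
  exact ⟨a, h0, fun w hw => by simpa [hw] using hlt w, by simpa using hlt w₀⟩

end VaalerWidmer

/-- Corollary 1.1: if $K$ contains a root of unity other than $\pm 1$, then there is
$\alpha\in O_K$ with $K=\mathbb{Q}(\alpha)$ and $H(\alpha)\le c_K$. -/
theorem statement11 (K : Type*) [Field K] [NumberField K]
    (htor : ∃ x : K, (∃ n : ℕ, 0 < n ∧ x ^ n = 1) ∧ x ≠ 1 ∧ x ≠ -1) :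
    ∃ α : 𝓞 K, IntermediateField.adjoin ℚ {(α : K)} = ⊤ ∧
      intHeight (α : K) ≤ minkowskiConst K := by
  classical
  obtain ⟨ζ, ⟨n, hn, hζn⟩, hζ1, hζm1⟩ := htor
  have hζ0 : ζ ≠ 0 := by
    rintro rfl
    rw [zero_pow hn.ne'] at hζn
    exact zero_ne_one hζn
  -- every complex embedding sends ζ to a non-real number
  have him : ∀ φ : K →+* ℂ, (φ ζ).im ≠ 0 := by
    intro φ him0
    have hz : φ ζ = (((φ ζ).re : ℝ) : ℂ) := Complex.ext (by simp) (by simp [him0])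
    have hpow : ((φ ζ).re : ℂ) ^ n = 1 := by
      rw [← hz, ← map_pow, hζn, map_one]
    have hr : ((φ ζ).re : ℝ) ^ n = 1 := by exact_mod_cast hpow
    have habs : |(φ ζ).re| = 1 := by
      rcases lt_trichotomy |(φ ζ).re| 1 with h | h | h
      · have := pow_lt_one₀ (abs_nonneg _) h hn.ne'
        rw [← abs_pow, hr, abs_one] at this
        exact absurd this (lt_irrefl _)
      · exact h
      · have := one_lt_pow₀ h hn.ne'
        rw [← abs_pow, hr, abs_one] at this
        exact absurd this (lt_irrefl _)
    rcases abs_eq (zero_le_one) |>.mp habs with h | h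
    · exact hζ1 (φ.injective (by rw [hz, h, map_one]; norm_num))
    · exact hζm1 (φ.injective (by rw [hz, h, map_neg, map_one]; norm_num))
  have hcplx : ∀ w : InfinitePlace K, IsComplex w := by
    intro w
    rw [← not_isReal_iff_isComplex, isReal_iff]
    intro hre
    have hc := RingHom.congr_fun (ComplexEmbedding.isReal_iff.mp hre) ζ
    exact him (embedding w) (Complex.conj_eq_iff_im.mp hc)
  have hr0 : nrRealPlaces K = 0 :=
    Fintype.card_eq_zero_iff.mpr ⟨fun w => not_isReal_iff_isComplex.mpr (hcplx w.1) w.2⟩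
  obtain ⟨w₀⟩ := (inferInstance : Nonempty (InfinitePlace K))
  have hw₀ : IsComplex w₀ := hcplx w₀
  have hwζ : ∀ w : InfinitePlace K, w ζ = 1 := by
    intro w
    have h1 : (w ζ) ^ n = 1 := by rw [← map_pow, hζn, map_one]
    rcases lt_trichotomy (w ζ) 1 with h | h | h
    · have := pow_lt_one₀ (apply_nonneg w ζ) h hn.ne'
      rw [h1] at this; exact absurd this (lt_irrefl _)
    · exact h
    · have := one_lt_pow₀ h hn.ne'
      rw [h1] at this; exact absurd this (lt_irrefl _)
  set T : ℝ := (2 / Real.pi) ^ nrComplexPlaces K * Real.sqrt |(discr K : ℝ)| with hT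
  have hT0 : 0 ≤ T := mul_nonneg (pow_nonneg (by positivity) _) (Real.sqrt_nonneg _)
  set B : ℝ := Real.sqrt T with hB
  have hB0 : 0 ≤ B := Real.sqrt_nonneg _
  have hB2 : B ^ 2 = T := Real.sq_sqrt hT0
  -- a sequence of candidates
  have hseq : ∀ m : ℕ, ∃ α : 𝓞 K, α ≠ 0 ∧ (∀ ⦃w : InfinitePlace K⦄, w ≠ w₀ → w (α : K) < 1) ∧
      w₀ (α : K) < B + 1 / (m + 1) := by
    intro m
    have hpos : (0 : ℝ) < 1 / (m + 1) := by positivity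
    obtain ⟨α, h1, h2, h3⟩ := aux_mink w₀ hw₀ hr0 ⟨B + 1 / (m + 1), by positivity⟩ (by
      show T < (B + 1 / (m + 1)) ^ 2
      nlinarith)
    exact ⟨α, h1, h2, h3⟩
  choose αs h1s h2s h3s using hseq
  -- Northcott: all candidates live in a finite set
  set S : Set K := {x : K | IsIntegral ℤ x ∧ ∀ φ : K →+* ℂ, ‖φ x‖ ≤ B + 1} with hS
  have hfin : S.Finite := NumberField.Embeddings.finite_of_norm_le K ℂ (B + 1)
  have hmem : ∀ m, ((αs m : K)) ∈ S := by
    intro m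
    refine ⟨(αs m).isIntegral_coe, fun φ => ?_⟩
    have heq : ‖φ ((αs m : K))‖ = (mk φ) ((αs m : K)) := rfl
    by_cases hφ : mk φ = w₀
    · have h3 := h3s m
      have hle : (1 : ℝ) / (m + 1) ≤ 1 := by
        rw [div_le_one (by positivity)]
        linarith [Nat.cast_nonneg (α := ℝ) m]
      rw [heq, hφ]
      linarith
    · have := h2s m hφ
      rw [heq]
      linarith
  haveI := hfin.to_subtype
  obtain ⟨y, hy⟩ := Finite.exists_infinite_fiber (fun m => (⟨(αs m : K), hmem m⟩ : S))
  have hyinf : {m : ℕ | (αs m : K) = (y : K)}.Infinite := by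
    have h := Set.infinite_coe_iff.mp hy
    exact h.mono fun m hm => by
      simpa [Subtype.ext_iff] using hm
  obtain ⟨m₀, hm₀⟩ := hyinf.nonempty
  set α : 𝓞 K := αs m₀ with hαdef
  have hα0 : α ≠ 0 := h1s m₀
  have hαlt : ∀ ⦃w : InfinitePlace K⦄, w ≠ w₀ → w (α : K) < 1 := h2s m₀
  have hle : w₀ (α : K) ≤ B := by
    refine le_of_forall_pos_le_add fun ε hε => ?_
    obtain ⟨m₁, hm₁⟩ := exists_nat_gt (1 / ε)
    obtain ⟨m, hmmem, hmm⟩ := hyinf.exists_gt m₁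
    have hmα : (αs m : K) = (α : K) := by
      rw [Set.mem_setOf_eq] at hmmem hm₀
      rw [hmmem, ← hm₀]
    have h3 := h3s m
    rw [hmα] at h3
    have h1ε : (1 : ℝ) / (m + 1) ≤ ε := by
      rw [div_le_iff₀ (by positivity)]
      rw [div_lt_iff₀ hε] at hm₁
      have : (m₁ : ℝ) ≤ m := by exact_mod_cast hmm.le
      nlinarith
    linarith
  -- build the generator: multiply by ζ if necessary to make the value at w₀ non-real
  have hζint : IsIntegral ℤ ζ := by
    refine ⟨Polynomial.X ^ n - Polynomial.C 1, Polynomial.monic_X_pow_sub_C 1 hn.ne', ?_⟩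
    simp [hζn]
  set ζO : 𝓞 K := ⟨ζ, hζint⟩ with hζO
  have hζOcoe : ((ζO : K)) = ζ := rfl
  have hζO0 : ζO ≠ 0 := by
    intro h
    apply hζ0
    rw [← hζOcoe, h]
    rfl
  have hαK0 : (α : K) ≠ 0 := RingOfIntegers.coe_ne_zero_iff.mpr hα0
  have hz0 : (embedding w₀) (α : K) ≠ 0 := by
    simpa [map_eq_zero] using hαK0
  have hβ : ∃ β : 𝓞 K, β ≠ 0 ∧ (∀ ⦃w : InfinitePlace K⦄, w ≠ w₀ → w (β : K) < 1) ∧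
      w₀ (β : K) ≤ B ∧ ((embedding w₀) (β : K)).im ≠ 0 := by
    by_cases him0 : ((embedding w₀) (α : K)).im = 0
    case neg => exact ⟨α, hα0, hαlt, hle, him0⟩
    case pos =>
      refine ⟨ζO * α, mul_ne_zero hζO0 hα0, ?_, ?_, ?_⟩
      · intro w hw
        have hcoe : ((ζO * α : 𝓞 K) : K) = ζ * (α : K) := by push_cast; rfl
        rw [hcoe, map_mul, hwζ w, one_mul]
        exact hαlt hw
      · have hcoe : ((ζO * α : 𝓞 K) : K) = ζ * (α : K) := by push_cast; rfl
        rw [hcoe, map_mul, hwζ w₀, one_mul]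
        exact hle
      · have hcoe : ((ζO * α : 𝓞 K) : K) = ζ * (α : K) := by push_cast; rfl
        rw [hcoe, map_mul, Complex.mul_im, him0, mul_zero, zero_add]
        refine mul_ne_zero (him (embedding w₀)) ?_
        intro hre0
        exact hz0 (Complex.ext (by simpa using hre0) (by simpa using him0))
  obtain ⟨β, hβ0, hβlt, hβle, hβim⟩ := hβ
  refine ⟨β, aux_prim hβ0 hβlt hβim, ?_⟩
  have h1β : 1 ≤ w₀ (β : K) := one_le_of_lt_one hβ0 hβlt
  have hmult2 : mult w₀ = 2 := by
    simp [mult, not_isReal_iff_isComplex.mpr hw₀]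
  have hP : ∏ φ : K →+* ℂ, max 1 ‖φ (β : K)‖ ≤ T := by
    calc ∏ φ : K →+* ℂ, max 1 ‖φ (β : K)‖
        ≤ ∏ φ : K →+* ℂ, (if mk φ = w₀ then w₀ (β : K) else 1) := by
          refine Finset.prod_le_prod (fun φ _ => le_trans zero_le_one (le_max_left _ _))
            (fun φ _ => ?_)
          have habs : ‖φ (β : K)‖ = (mk φ) (β : K) := rfl
          by_cases hφ : mk φ = w₀
          · rw [if_pos hφ]
            refine max_le h1β ?_
            rw [habs, hφ]
          · rw [if_neg hφ]
            exact max_le le_rfl (by rw [habs]; exact (hβlt hφ).le)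
      _ = (w₀ (β : K)) ^ 2 := by
          rw [Finset.prod_ite, Finset.prod_const, Finset.prod_const, one_pow, mul_one]
          congr 1
          rw [card_filter_mk_eq, hmult2]
      _ ≤ B ^ 2 := pow_le_pow_left₀ (le_trans zero_le_one h1β) hβle 2
      _ = T := hB2
  have hP0 : 0 ≤ ∏ φ : K →+* ℂ, max 1 ‖φ (β : K)‖ :=
    Finset.prod_nonneg fun φ _ => le_trans zero_le_one (le_max_left _ _)
  have hstep : intHeight (β : K) ≤ T ^ ((finrank ℚ K : ℝ)⁻¹) := by
    rw [intHeight]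
    exact Real.rpow_le_rpow hP0 hP (by positivity)
  refine hstep.trans_eq ?_
  -- T ^ (1/d) = c_K
  have hd0 : (0 : ℝ) < (finrank ℚ K : ℝ) := by
    exact_mod_cast Module.finrank_pos
  rw [hT, minkowskiConst,
    Real.mul_rpow (pow_nonneg (by positivity) _) (Real.sqrt_nonneg _)]
  congr 1
  · rw [← Real.rpow_natCast (2 / Real.pi) (nrComplexPlaces K), ← Real.rpow_mul (by positivity),
      ← div_eq_mul_inv]
  · rw [Real.sqrt_eq_rpow, ← Real.rpow_mul (abs_nonneg _)]
    congr 1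
    field_simp
end

section
/- Let K be a number field such that c_K < min{H(α) : α ∈ O_K, K = Q(α)}. Then Tor(K^×) = {±1}, i.e., the only roots of unity in K are ±1. -/
open NumberField

open scoped NNReal ENNReal Classical
open NumberField.InfinitePlace NumberField.mixedEmbedding MeasureTheory ZSpan

section Aux
variable (K : Type*) [Field K] [NumberField K]


lemma aux_nrReal (hall : ∀ w : InfinitePlace K, IsComplex w) : nrRealPlaces K = 0 := by
  rw [nrRealPlaces, Fintype.card_eq_zero_iff]
  exact ⟨fun w => (not_isReal_iff_isComplex.mpr (hall w.1)) w.2⟩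

lemma aux_rank (hall : ∀ w : InfinitePlace K, IsComplex w) :
    Module.finrank ℚ K = 2 * nrComplexPlaces K := by
  have := card_add_two_mul_card_eq_rank K
  rw [aux_nrReal K hall] at this
  omega

lemma aux_minkowski_s14 (hall : ∀ w : InfinitePlace K, IsComplex w) (w₀ : InfinitePlace K)
    (R : ℝ≥0)
    (hR : (2 / Real.pi) ^ (nrComplexPlaces K) * Real.sqrt |(discr K : ℝ)| < (R : ℝ) ^ 2) :
    ∃ θ : 𝓞 K, θ ≠ 0 ∧ (∀ w : InfinitePlace K, w ≠ w₀ → w θ < 1) ∧ w₀ (θ : K) < R := by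
  classical
  set s := nrComplexPlaces K with hs
  have hvol : minkowskiBound K ↑1 <
      volume (convexBodyLT K (fun w => if w = w₀ then R else 1)) := by
    rw [convexBodyLT_volume, ← Finset.prod_erase_mul _ _ (Finset.mem_univ w₀)]
    simp_rw [ite_pow, one_pow]
    rw [Finset.prod_ite_eq']
    simp_rw [Finset.notMem_erase, ite_false, mult,
      not_isReal_iff_isComplex.mpr (hall w₀), ite_false, one_mul]
    rw [minkowskiBound, volume_fundamentalDomain_fractionalIdealLatticeBasis,
      volume_fundamentalDomain_latticeBasis, mixedEmbedding.finrank]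
    simp only [if_true, Units.val_one, FractionalIdeal.absNorm_one, Rat.cast_one,
      ENNReal.ofReal_one, one_mul, convexBodyLTFactor, aux_nrReal K hall, pow_zero,
      aux_rank K hall, ← hs]
    rw [show ((2:ℝ≥0∞))⁻¹ = ((2⁻¹ : ℝ≥0) : ℝ≥0∞) by simp,
      show ((2:ℝ≥0∞)) = ((2 : ℝ≥0) : ℝ≥0∞) by simp, ← ENNReal.coe_pow, ← ENNReal.coe_pow,
      ← ENNReal.coe_mul, ← ENNReal.coe_mul, ← ENNReal.coe_mul, ENNReal.coe_lt_coe,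
      ← NNReal.coe_lt_coe]
    push_cast
    rw [Int.norm_eq_abs, NNReal.coe_real_pi]
    have hπ : (0:ℝ) < Real.pi ^ s := by positivity
    have e1 : (2:ℝ)⁻¹ ^ s * Real.sqrt |((discr K : ℤ) : ℝ)| * 2 ^ (2*s)
        = ((2 / Real.pi) ^ s * Real.sqrt |((discr K : ℤ) : ℝ)|) * Real.pi ^ s := by
      have l1 : (2:ℝ)⁻¹ ^ s * 2 ^ (2*s) = 2 ^ s := by
        rw [inv_pow, two_mul, pow_add, ← mul_assoc,
          inv_mul_cancel₀ (by positivity : (2:ℝ)^s ≠ 0), one_mul]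
      have l2 : ((2:ℝ)/Real.pi) ^ s * Real.pi ^ s = 2 ^ s := by
        rw [← mul_pow, div_mul_cancel₀ _ Real.pi_ne_zero]
      linear_combination (Real.sqrt |((discr K : ℤ) : ℝ)|) * l1 -
        (Real.sqrt |((discr K : ℤ) : ℝ)|) * l2
    rw [e1]
    have h2 := mul_lt_mul_of_pos_right hR hπ
    nlinarith [h2]
  obtain ⟨θ, h0, h1⟩ := exists_ne_zero_mem_ringOfIntegers_lt K hvol
  refine ⟨θ, h0, fun w hw => ?_, ?_⟩
  · have := h1 w; rwa [if_neg hw, NNReal.coe_one] at this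
  · have := h1 w₀; rwa [if_pos rfl] at this

lemma aux_pow_one {r : ℝ} {n : ℕ} (h0 : 0 ≤ r) (hn : n ≠ 0) (h : r ^ n = 1) : r = 1 := by
  by_contra hne
  rcases lt_or_gt_of_ne hne with hlt | hgt
  · have := pow_lt_one₀ h0 hlt hn
    rw [h] at this; exact lt_irrefl 1 this
  · have := one_lt_pow₀ hgt hn
    rw [h] at this; exact lt_irrefl 1 this

lemma aux_real_root {z : ℂ} {n : ℕ} (hn : 0 < n) (hz : z ^ n = 1)
    (hc : (starRingEnd ℂ) z = z) : z = 1 ∨ z = -1 := by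
  rw [Complex.conj_eq_iff_re] at hc
  have hr : (z.re : ℝ) ^ n = 1 := by
    have : ((z.re : ℂ)) ^ n = 1 := by rw [hc, hz]
    exact_mod_cast this
  have habs : |z.re| ^ n = 1 := by rw [← abs_pow, hr, abs_one]
  have h1 : |z.re| = 1 := aux_pow_one (abs_nonneg _) hn.ne' habs
  rcases (abs_eq (zero_le_one)).mp h1 with h | h
  · left; rw [← hc, h, Complex.ofReal_one]
  · right; rw [← hc, h]; norm_num

open scoped IntermediateField in
lemma aux_gen (w₀ : InfinitePlace K) {β : 𝓞 K} (hβ : β ≠ 0)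
    (h2 : ∀ ⦃w : InfinitePlace K⦄, w ≠ w₀ → w (β : K) < 1)
    (hni : (starRingEnd ℂ) (w₀.embedding (β : K)) ≠ w₀.embedding (β : K)) :
    IntermediateField.adjoin ℚ {(β : K)} = ⊤ := by
  have h1 : 1 ≤ w₀ (β : K) := one_le_of_lt_one hβ h2
  rw [show IntermediateField.adjoin ℚ {(β : K)} = ℚ⟮(β : K)⟯ from rfl]
  rw [Field.primitive_element_iff_algHom_eq_of_eval ℚ ℂ
    (fun x => IsAlgClosed.splits ((minpoly ℚ x).map (algebraMap ℚ ℂ))) _ w₀.embedding.toRatAlgHom]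
  intro ψ hψ
  have hψ' : w₀.embedding (β : K) = ψ (β : K) := hψ
  have key : InfinitePlace.mk (ψ : K →+* ℂ) = w₀ := by
    by_contra h
    have hlt := h2 h
    rw [InfinitePlace.apply] at hlt
    have : ‖(ψ : K →+* ℂ) (β : K)‖ = w₀ (β : K) := by
      show ‖ψ (β : K)‖ = _
      rw [← hψ', ← norm_embedding_eq]
    rw [this] at hlt
    exact absurd h1 (not_le.mpr hlt)
  rw [← mk_embedding w₀, mk_eq_iff] at key
  rcases key with h | h
  · exact AlgHom.ext fun y => by rw [show ψ y = (ψ : K →+* ℂ) y from rfl, h]; rfl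
  · exfalso
    have h3 := RingHom.congr_fun h (β : K)
    rw [ComplexEmbedding.conjugate_coe_eq] at h3
    exact hni (by rw [hψ']; exact h3.trans hψ')

lemma aux_prod_bound (hall : ∀ w : InfinitePlace K, IsComplex w) (w₀ : InfinitePlace K)
    (β : K) (h2 : ∀ w : InfinitePlace K, w ≠ w₀ → w β < 1) (h1 : 1 ≤ w₀ β) :
    ∏ φ : K →+* ℂ, max 1 ‖φ β‖ ≤ (w₀ β) ^ 2 := by
  classical
  have hle : ∀ φ : K →+* ℂ, max 1 ‖φ β‖ ≤
      (if InfinitePlace.mk φ = w₀ then w₀ β else 1) := by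
    intro φ
    by_cases h : InfinitePlace.mk φ = w₀
    · rw [if_pos h, max_le_iff]
      refine ⟨h1, ?_⟩
      rw [← InfinitePlace.apply, h]
    · rw [if_neg h, max_le_iff]
      refine ⟨le_refl _, ?_⟩
      rw [← InfinitePlace.apply]
      exact (h2 _ h).le
  calc ∏ φ : K →+* ℂ, max 1 ‖φ β‖
      ≤ ∏ φ : K →+* ℂ, (if InfinitePlace.mk φ = w₀ then w₀ β else 1) := by
        refine Finset.prod_le_prod (fun φ _ => ?_) (fun φ _ => hle φ)
        exact le_trans zero_le_one (le_max_left _ _)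
    _ = (w₀ β) ^ 2 := by
        rw [Finset.prod_ite, Finset.prod_const, Finset.prod_const, one_pow, mul_one,
          NumberField.InfinitePlace.card_filter_mk_eq]
        congr 1
        simp [InfinitePlace.mult, not_isReal_iff_isComplex.mpr (hall w₀)]

lemma aux_const :
    minkowskiConst K = ((2 / Real.pi) ^ (nrComplexPlaces K) *
      Real.sqrt |(discr K : ℝ)|) ^ ((Module.finrank ℚ K : ℝ)⁻¹) := by
  have h2π : (0:ℝ) ≤ 2 / Real.pi := by positivity
  have habs : (0:ℝ) ≤ |(discr K : ℝ)| := abs_nonneg _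
  rw [Real.mul_rpow (by positivity) (Real.sqrt_nonneg _)]
  rw [← Real.rpow_natCast (2 / Real.pi) (nrComplexPlaces K), ← Real.rpow_mul h2π]
  rw [Real.sqrt_eq_rpow, ← Real.rpow_mul habs]
  rw [minkowskiConst]
  have e1 : (nrComplexPlaces K : ℝ) * (Module.finrank ℚ K : ℝ)⁻¹
      = (nrComplexPlaces K : ℝ) / (Module.finrank ℚ K : ℝ) := (div_eq_mul_inv _ _).symm
  have e2 : (1/2 : ℝ) * (Module.finrank ℚ K : ℝ)⁻¹
      = 1 / (2 * (Module.finrank ℚ K : ℝ)) := by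
    rw [div_eq_mul_inv, div_eq_mul_inv, mul_inv]; ring
  rw [e1, e2]

end Aux

/-- If $c_K$ is smaller than the height of every integral generator of $K$, then the
only roots of unity in $K$ are $\pm 1$. -/
theorem statement14 (K : Type*) [Field K] [NumberField K]
    (hmin : ∀ α : 𝓞 K, IntermediateField.adjoin ℚ {(α : K)} = ⊤ →
      minkowskiConst K < intHeight (α : K)) :
    ∀ x : K, (∃ n : ℕ, 0 < n ∧ x ^ n = 1) → x = 1 ∨ x = -1 := by
  intro x hx
  obtain ⟨n, hn, hxn⟩ := hx
  by_contra hcon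
  push_neg at hcon
  obtain ⟨hx1, hxm1⟩ := hcon
  have hx0 : x ≠ 0 := by
    rintro rfl
    rw [zero_pow hn.ne'] at hxn
    exact zero_ne_one hxn
  -- x is an algebraic integer
  have hxint : IsIntegral ℤ x := by
    refine ⟨Polynomial.X ^ n - Polynomial.C 1, Polynomial.monic_X_pow_sub_C 1 hn.ne', ?_⟩
    simp [hxn]
  set ζ : 𝓞 K := ⟨x, hxint⟩ with hζ
  have hζ0 : ζ ≠ 0 := by
    intro h
    apply hx0
    have h2 : (ζ : K) = 0 := by rw [h]; simp
    exact h2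
  -- from an embedding fixing x under conjugation, conclude x = ±1
  have hfix : ∀ φ : K →+* ℂ, (starRingEnd ℂ) (φ x) = φ x → False := by
    intro φ hφ
    have hpow : (φ x) ^ n = 1 := by rw [← map_pow, hxn, map_one]
    rcases aux_real_root hn hpow hφ with h | h
    · exact hx1 (φ.injective (by rw [h, map_one]))
    · exact hxm1 (φ.injective (by rw [h, map_neg, map_one]))
  -- all infinite places are complex
  have hall : ∀ w : InfinitePlace K, IsComplex w := by
    intro w
    rw [← not_isReal_iff_isComplex]
    intro hw
    have hreal := isReal_iff.mp hw
    rw [ComplexEmbedding.isReal_iff] at hreal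
    have := RingHom.congr_fun hreal x
    rw [ComplexEmbedding.conjugate_coe_eq] at this
    exact hfix _ this
  obtain ⟨w₀⟩ : Nonempty (InfinitePlace K) := inferInstance
  -- x has absolute value one at all places
  have hxw : ∀ w : InfinitePlace K, w x = 1 := by
    intro w
    refine aux_pow_one (apply_nonneg w x) hn.ne' ?_
    rw [← map_pow, hxn, map_one]
  set A : ℝ := (2 / Real.pi) ^ (nrComplexPlaces K) * Real.sqrt |(discr K : ℝ)| with hA
  have hdiscr : (0:ℝ) < |(discr K : ℝ)| := by
    rw [abs_pos]
    exact_mod_cast discr_ne_zero K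
  have hA0 : 0 < A := by
    rw [hA]; positivity
  -- main step : generators of bounded height
  have main : ∀ m : ℕ, ∃ β : 𝓞 K, IntermediateField.adjoin ℚ {(β : K)} = ⊤ ∧
      (∀ w : InfinitePlace K, w ≠ w₀ → w (β : K) < 1) ∧
      (w₀ (β : K)) ^ 2 < A + 1/(m+1) ∧ 1 ≤ w₀ (β : K) := by
    intro m
    set R : ℝ≥0 := Real.toNNReal (Real.sqrt (A + 1/(m+1))) with hRdef
    have hAm : (0:ℝ) < A + 1/(m+1) := by positivity
    have hRcoe : (R : ℝ) = Real.sqrt (A + 1/(m+1)) :=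
      Real.coe_toNNReal _ (Real.sqrt_nonneg _)
    have hR : A < (R : ℝ) ^ 2 := by
      rw [hRcoe, Real.sq_sqrt hAm.le]
      have : (0:ℝ) < 1/(m+1) := by positivity
      linarith
    obtain ⟨θ, hθ0, hθ1, hθ2⟩ := aux_minkowski_s14 K hall w₀ R hR
    have hθw₀ : 1 ≤ w₀ (θ : K) := one_le_of_lt_one hθ0 (fun w hw => hθ1 w hw)
    have hbound : ∀ β : 𝓞 K, w₀ (β : K) = w₀ (θ : K) → (w₀ (β : K)) ^ 2 < A + 1/(m+1) := by
      intro β hβ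
      rw [hβ]
      calc (w₀ (θ : K)) ^ 2 < (R : ℝ) ^ 2 := by
            apply pow_lt_pow_left₀ hθ2 (apply_nonneg _ _)
            norm_num
        _ = A + 1/(m+1) := by rw [hRcoe, Real.sq_sqrt hAm.le]
    by_cases hg : IntermediateField.adjoin ℚ {((θ : 𝓞 K) : K)} = ⊤
    · exact ⟨θ, hg, hθ1, hbound θ rfl, hθw₀⟩
    · -- ζ * θ values
      have hζθcoe : ((ζ * θ : 𝓞 K) : K) = x * (θ : K) := by push_cast; rfl
      have hζθw : ∀ w : InfinitePlace K, w ((ζ * θ : 𝓞 K) : K) = w (θ : K) := by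
        intro w
        rw [hζθcoe, map_mul, hxw w, one_mul]
      have hζθ1 : ∀ w : InfinitePlace K, w ≠ w₀ → w ((ζ * θ : 𝓞 K) : K) < 1 := by
        intro w hw; rw [hζθw w]; exact hθ1 w hw
      have hζθ0 : (ζ * θ : 𝓞 K) ≠ 0 := mul_ne_zero hζ0 hθ0
      by_cases hg2 : IntermediateField.adjoin ℚ {((ζ * θ : 𝓞 K) : K)} = ⊤
      · refine ⟨ζ * θ, hg2, hζθ1, hbound _ (hζθw w₀), ?_⟩
        rw [hζθw w₀]; exact hθw₀
      · exfalso
        -- both fail to generate : conjugation fixes both values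
        have hc1 : (starRingEnd ℂ) (w₀.embedding (θ : K)) = w₀.embedding (θ : K) := by
          by_contra hni
          exact hg (aux_gen K w₀ hθ0 (fun w hw => hθ1 w hw) hni)
        have hc2 : (starRingEnd ℂ) (w₀.embedding ((ζ * θ : 𝓞 K) : K))
            = w₀.embedding ((ζ * θ : 𝓞 K) : K) := by
          by_contra hni
          exact hg2 (aux_gen K w₀ hζθ0 (fun w hw => hζθ1 w hw) hni)
        rw [hζθcoe, map_mul, map_mul, hc1] at hc2
        have hθne : w₀.embedding (θ : K) ≠ 0 := by
          intro h
          have : (θ : K) = 0 := w₀.embedding.injective (by rw [h, map_zero])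
          exact hθ0 (by exact_mod_cast this)
        exact hfix w₀.embedding (mul_right_cancel₀ hθne hc2)
  -- Northcott : finitely many candidates
  set B : ℝ := max 1 (Real.sqrt (A + 1)) with hB
  have hSfin := NumberField.Embeddings.finite_of_norm_le K ℂ B
  have hmem : ∀ m : ℕ, ((main m).choose : K) ∈
      {x : K | IsIntegral ℤ x ∧ ∀ φ : K →+* ℂ, ‖φ x‖ ≤ B} := by
    intro m
    obtain ⟨hgen, hlt, hsq, hone⟩ := (main m).choose_spec
    refine ⟨RingOfIntegers.isIntegral_coe _, fun φ => ?_⟩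
    rw [show ‖φ ((main m).choose : K)‖ = (InfinitePlace.mk φ) ((main m).choose : K) from
      (InfinitePlace.apply φ _).symm]
    by_cases h : InfinitePlace.mk φ = w₀
    · rw [h]
      have h1 : (w₀ ((main m).choose : K)) ^ 2 ≤ A + 1 := by
        have : 1/((m:ℝ)+1) ≤ 1 := by
          rw [div_le_one (by positivity)]
          linarith [Nat.cast_nonneg (α := ℝ) m]
        linarith
      have h2 : w₀ ((main m).choose : K) ≤ Real.sqrt (A + 1) := by
        rw [← Real.sqrt_sq (apply_nonneg w₀ _)]
        exact Real.sqrt_le_sqrt h1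
      exact le_trans h2 (le_max_right _ _)
    · exact le_trans (hlt _ h).le (le_max_left _ _)
  haveI : Finite {x : K | IsIntegral ℤ x ∧ ∀ φ : K →+* ℂ, ‖φ x‖ ≤ B} := hSfin.to_subtype
  set g : ℕ → {x : K | IsIntegral ℤ x ∧ ∀ φ : K →+* ℂ, ‖φ x‖ ≤ B} :=
    fun m => ⟨((main m).choose : K), hmem m⟩ with hg
  obtain ⟨y, hy⟩ := Finite.exists_infinite_fiber g
  have hyinf : (g ⁻¹' {y}).Infinite := Set.infinite_coe_iff.mp hy
  obtain ⟨m₀, hm₀⟩ := hyinf.nonempty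
  set α : 𝓞 K := (main m₀).choose with hα
  obtain ⟨hgen₀, hlt₀, hsq₀, hone₀⟩ := (main m₀).choose_spec
  -- the height product of α is at most A
  set P : ℝ := ∏ φ : K →+* ℂ, max 1 ‖φ (α : K)‖ with hP
  have hP0 : 0 ≤ P := by
    rw [hP]
    exact Finset.prod_nonneg fun φ _ => le_trans zero_le_one (le_max_left _ _)
  have hPA : P ≤ A := by
    by_contra hgt
    push_neg at hgt
    obtain ⟨m₁, hm₁⟩ := exists_nat_gt (1/(P - A))
    obtain ⟨m₂, hm₂mem, hm₂gt⟩ := hyinf.exists_gt m₁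
    have hcoe : ((main m₂).choose : K) = (α : K) := by
      have h1 : g m₂ = y := hm₂mem
      have h2 : g m₀ = y := hm₀
      have h3 := h1.trans h2.symm
      have hv : (g m₂ : K) = (g m₀ : K) := congrArg Subtype.val h3
      exact hv
    obtain ⟨hgen₂, hlt₂, hsq₂, hone₂⟩ := (main m₂).choose_spec
    rw [hcoe] at hsq₂ hlt₂ hone₂
    have hPb : P ≤ (w₀ (α : K)) ^ 2 := by
      rw [hP]
      exact aux_prod_bound K hall w₀ (α : K) hlt₂ hone₂
    have hPAgap : 0 < P - A := by linarith
    have hinv : 1/((m₂:ℝ)+1) < P - A := by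
      rw [div_lt_iff₀ (by positivity)]
      have hm12 : (m₁ : ℝ) < m₂ := by exact_mod_cast hm₂gt
      have : 1/(P-A) < (m₂ : ℝ) + 1 := by linarith
      calc (1:ℝ) = (P-A) * (1/(P-A)) := by field_simp
        _ < (P-A) * ((m₂:ℝ)+1) := by
            exact mul_lt_mul_of_pos_left this hPAgap
    linarith
  -- conclude
  have hheight : intHeight (α : K) ≤ minkowskiConst K := by
    rw [aux_const K, intHeight]
    exact Real.rpow_le_rpow hP0 hPA (by positivity)
  exact absurd (hmin α hgen₀) (not_lt.mpr hheight)
end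

section
/- Let α be an algebraic integer with α² = √3 − 2 and K = Q(α). Then the only roots of unity in K are ±1, i.e., Tor(K^×) = {±1}. -/
open NumberField

open Polynomial IntermediateField

-- helper: no rational square
lemma notSqNat : ¬IsSquare (2:ℕ) ∧ ¬IsSquare (5:ℕ) ∧ ¬IsSquare (6:ℕ) ∧ ¬IsSquare (15:ℕ) ∧ ¬IsSquare (18:ℕ) := by
  refine ⟨?_, ?_, ?_, ?_, ?_⟩ <;>
  · rintro ⟨r, hr⟩
    have : r ≤ 5 := by nlinarith
    interval_cases r <;> omega

lemma ratsq_ne (q : ℚ) (n : ℕ) (h : ¬ IsSquare n) : q ^ 2 ≠ (n : ℚ) := by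
  intro hq
  have h2 : IsSquare ((n:ℚ)) := ⟨q, by rw [← hq]; ring⟩
  rw [Rat.isSquare_natCast_iff] at h2; exact h h2

lemma sqrt3_lin (p q : ℚ) (h : (p:ℝ) + (q:ℝ) * Real.sqrt 3 = 0) : p = 0 ∧ q = 0 := by
  have hirr : Irrational (Real.sqrt 3) := by
    simpa using (Nat.prime_three).irrational_sqrt
  by_cases hq : q = 0
  · subst hq; simp at h; exact ⟨by exact_mod_cast h, rfl⟩
  · exfalso
    apply hirr
    refine ⟨-p/q, ?_⟩
    have hq' : (q:ℝ) ≠ 0 := by exact_mod_cast hq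
    push_cast
    field_simp
    linarith
open Polynomial IntermediateField

lemma sqrt3lt2 : Real.sqrt 3 < 2 := by
  nlinarith [Real.sq_sqrt (by norm_num : (0:ℝ) ≤ 3), Real.sqrt_nonneg 3]

lemma alpha_re {α : ℂ} (hα : α ^ 2 = (Real.sqrt 3 : ℂ) - 2) : α.re = 0 := by
  have h1 := congrArg Complex.re hα
  have h2 := congrArg Complex.im hα
  simp [pow_two, Complex.mul_re, Complex.mul_im, Complex.sub_re, Complex.sub_im] at h1 h2
  rcases mul_eq_zero.mp (by linarith : α.re * α.im = 0) with h | h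
  · exact h
  · exfalso; rw [h] at h1; nlinarith [sqrt3lt2, sq_nonneg α.re]

lemma alpha_im_sq {α : ℂ} (hα : α ^ 2 = (Real.sqrt 3 : ℂ) - 2) : α.im ^ 2 = 2 - Real.sqrt 3 := by
  have h1 := congrArg Complex.re hα
  simp [pow_two, Complex.mul_re, Complex.sub_re] at h1
  have h0 := alpha_re hα
  nlinarith [h1]

lemma hM0 {α : ℂ} (hα : α ^ 2 = (Real.sqrt 3 : ℂ) - 2) :
    aeval α (X^4 + 4*X^2 + 1 : ℚ[X]) = 0 := by
  have h3 : ((Real.sqrt 3 : ℝ) : ℂ)^2 = 3 := by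
    norm_cast
    exact Real.sq_sqrt (by norm_num)
  simp only [map_add, map_pow, map_mul, aeval_X, map_one, map_ofNat]
  linear_combination (α^2 + ((Real.sqrt 3:ℝ):ℂ) + 2) * hα + h3

lemma Mmonic : (X^4 + 4*X^2 + 1 : ℚ[X]).Monic := by monicity!

lemma Mdeg : (X^4 + 4*X^2 + 1 : ℚ[X]).natDegree = 4 := by compute_degree!

lemma hint {α : ℂ} (hα : α ^ 2 = (Real.sqrt 3 : ℂ) - 2) : IsIntegral ℚ α :=
  ⟨X^4 + 4*X^2 + 1, Mmonic, hM0 hα⟩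

lemma rep {α : ℂ} (hα : α ^ 2 = (Real.sqrt 3 : ℂ) - 2) {x : ℂ}
    (hx : x ∈ IntermediateField.adjoin ℚ {α}) :
    ∃ a b c d : ℚ, x = a + b*α + c*α^2 + d*α^3 := by
  rw [← IntermediateField.mem_toSubalgebra,
    IntermediateField.adjoin_simple_toSubalgebra_of_isAlgebraic (hint hα).isAlgebraic,
    Algebra.adjoin_singleton_eq_range_aeval] at hx
  obtain ⟨p, hp⟩ := hx
  set M : ℚ[X] := X^4 + 4*X^2 + 1 with hMdef
  have hmon : M.Monic := Mmonic
  have hx2 : aeval α (p %ₘ M) = x := by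
    rw [← hp]
    conv_rhs => rw [← modByMonic_add_div p M]
    simp [hM0 hα]
    exact Or.inl (hM0 hα)
  have hdeg : (p %ₘ M).natDegree < 4 := by
    have h1 : (p %ₘ M).natDegree < M.natDegree :=
      natDegree_modByMonic_lt p hmon (by
        intro h
        have h2 : M.natDegree = 4 := Mdeg
        rw [h] at h2
        simp at h2)
    have : M.natDegree = 4 := Mdeg
    omega
  refine ⟨(p %ₘ M).coeff 0, (p %ₘ M).coeff 1, (p %ₘ M).coeff 2, (p %ₘ M).coeff 3, ?_⟩
  rw [← hx2, aeval_eq_sum_range' hdeg]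
  simp [Finset.sum_range_succ, Rat.smul_def]

lemma comps {α : ℂ} (hα : α ^ 2 = (Real.sqrt 3 : ℂ) - 2) {z : ℂ}
    (hz : z ∈ IntermediateField.adjoin ℚ {α}) :
    ∃ p1 q1 p2 q2 : ℚ,
      z.re = (p1:ℝ) + (q1:ℝ) * Real.sqrt 3 ∧ z.im = α.im * ((p2:ℝ) + (q2:ℝ) * Real.sqrt 3) := by
  obtain ⟨a, b, c, d, rfl⟩ := rep hα hz
  have hre : α.re = 0 := alpha_re hα
  have hdecomp : (a:ℂ) + b*α + c*α^2 + d*α^3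
      = (((a:ℝ) + (c:ℝ)*(Real.sqrt 3 - 2) : ℝ) : ℂ)
        + (((b:ℝ) + (d:ℝ)*(Real.sqrt 3 - 2) : ℝ) : ℂ) * α := by
    push_cast
    linear_combination ((c:ℂ) + (d:ℂ) * α) * hα
  rw [hdecomp]
  refine ⟨a - 2*c, c, b - 2*d, d, ?_, ?_⟩
  · simp [Complex.add_re, Complex.mul_re, hre]
    push_cast; ring
  · simp [Complex.add_im, Complex.mul_im, hre]
    push_cast; ring

lemma pure_im {α : ℂ} (hα : α ^ 2 = (Real.sqrt 3 : ℂ) - 2) {z : ℂ}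
    (hz : z ∈ IntermediateField.adjoin ℚ {α}) {c : ℚ} (hc : c = 1 ∨ c = 3)
    (h : z.im ^ 2 = (c : ℝ)) : False := by
  obtain ⟨p1, q1, p2, q2, _, him⟩ := comps hα hz
  have hy2 : α.im ^ 2 = 2 - Real.sqrt 3 := alpha_im_sq hα
  have hs : (Real.sqrt 3) ^ 2 = 3 := Real.sq_sqrt (by norm_num)
  have hteq : (2 - Real.sqrt 3) * ((p2:ℝ) + (q2:ℝ) * Real.sqrt 3)^2 = (c:ℝ) := by
    rw [← hy2]
    rw [him] at h
    linear_combination h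
  have hG : ((2*p2^2 + 6*q2^2 - 6*p2*q2 - c : ℚ) : ℝ)
      + ((4*p2*q2 - p2^2 - 3*q2^2 : ℚ):ℝ) * Real.sqrt 3 = 0 := by
    push_cast
    linear_combination hteq + (-2*(q2:ℝ)^2 + 2*p2*q2 + q2^2 * Real.sqrt 3) * hs
  obtain ⟨hA, hB⟩ := sqrt3_lin _ _ hG
  have hfact : (p2 - q2) * (p2 - 3*q2) = 0 := by linear_combination -hB
  rcases mul_eq_zero.mp hfact with h1 | h1
  · have h3 : (2*q2)^2 = 2*c := by linear_combination 2*hA + 4*hB - 4*q2*h1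
    rcases hc with rfl | rfl
    · exact ratsq_ne (2*q2) 2 notSqNat.1 (by push_cast; linarith)
    · exact ratsq_ne (2*q2) 6 notSqNat.2.2.1 (by push_cast; linarith)
  · have h3 : (6*q2)^2 = 6*c := by linear_combination 6*hA - 12*p2*h1
    rcases hc with rfl | rfl
    · exact ratsq_ne (6*q2) 6 notSqNat.2.2.1 (by push_cast; linarith)
    · exact ratsq_ne (6*q2) 18 notSqNat.2.2.2.2 (by push_cast; linarith)

lemma sq_neg {α : ℂ} (hα : α ^ 2 = (Real.sqrt 3 : ℂ) - 2) {w : ℂ}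
    (hw : w ∈ IntermediateField.adjoin ℚ {α}) {c : ℚ} (hc : c = 1 ∨ c = 3)
    (h : w ^ 2 = -(c : ℂ)) : False := by
  have hcpos : (0:ℝ) < (c:ℝ) := by rcases hc with rfl | rfl <;> norm_num
  have h1 := congrArg Complex.re h
  have h2 := congrArg Complex.im h
  simp [pow_two, Complex.mul_re, Complex.mul_im] at h1 h2
  rcases mul_eq_zero.mp (by linarith : w.re * w.im = 0) with h0 | h0
  · refine pure_im hα hw hc ?_
    rw [h0] at h1
    push_cast
    nlinarith
  · rw [h0] at h1
    nlinarith [sq_nonneg w.re]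

lemma two_mem {α : ℂ} : (2:ℂ) ∈ IntermediateField.adjoin ℚ {α} := by
  have := one_mem (IntermediateField.adjoin ℚ {α})
  have h2 : (2:ℂ) = 1 + 1 := by norm_num
  rw [h2]; exact add_mem this this

lemma no_order3 {α : ℂ} (hα : α ^ 2 = (Real.sqrt 3 : ℂ) - 2) {z : ℂ}
    (hz : z ∈ IntermediateField.adjoin ℚ {α}) (h3 : z ^ 3 = 1) (h1 : z ≠ 1) : False := by
  have hq : z^2 + z + 1 = 0 := by
    rcases mul_eq_zero.mp (show (z - 1) * (z^2 + z + 1) = 0 by linear_combination h3) with h | h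
    · exact absurd (by linear_combination h) h1
    · exact h
  have hw : (2*z + 1) ∈ IntermediateField.adjoin ℚ {α} :=
    add_mem (mul_mem two_mem hz) (one_mem _)
  refine sq_neg hα hw (Or.inr rfl) ?_
  push_cast
  linear_combination 4*hq

lemma no_order4 {α : ℂ} (hα : α ^ 2 = (Real.sqrt 3 : ℂ) - 2) {z : ℂ}
    (hz : z ∈ IntermediateField.adjoin ℚ {α}) (h : z ^ 2 = -1) : False := by
  refine sq_neg hα hz (Or.inl rfl) ?_
  push_cast
  exact h

lemma no_order5 {α : ℂ} (hα : α ^ 2 = (Real.sqrt 3 : ℂ) - 2) {z : ℂ}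
    (hz : z ∈ IntermediateField.adjoin ℚ {α}) (h5 : z ^ 5 = 1) (h1 : z ≠ 1) : False := by
  have hq : z^4 + z^3 + z^2 + z + 1 = 0 := by
    rcases mul_eq_zero.mp (show (z - 1) * (z^4 + z^3 + z^2 + z + 1) = 0 by
        linear_combination h5) with h | h
    · exact absurd (by linear_combination h) h1
    · exact h
  have hz0 : z ≠ 0 := by
    intro h; rw [h] at h5; simp at h5
  have habs : ‖z‖ = 1 := by
    have := Complex.norm_eq_one_of_pow_eq_one h5 (by norm_num)
    simpa using this
  have hconj : (starRingEnd ℂ) z = z ^ 4 := by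
    have hmc : z * (starRingEnd ℂ) z = 1 := by
      rw [Complex.mul_conj]
      norm_cast
      rw [← Complex.sq_norm, habs]; norm_num
    have hz4 : z * z ^ 4 = 1 := by linear_combination h5
    exact mul_left_cancel₀ hz0 (hmc.trans hz4.symm)
  set s : ℂ := z + z^4 with hsdef
  have hsK : s ∈ IntermediateField.adjoin ℚ {α} := add_mem hz (pow_mem hz 4)
  have hsim : s.im = 0 := by
    rw [hsdef, ← hconj]
    simp
  have hseq : s^2 + s - 1 = 0 := by
    rw [hsdef]
    linear_combination hq + (z^3 + 2) * h5
  have hre : ((s.re : ℂ))^2 + (s.re:ℂ) - 1 = 0 := by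
    have : (s.re : ℂ) = s := by
      apply Complex.ext <;> simp [hsim]
    rw [this]; exact hseq
  have hrre : (s.re)^2 + s.re - 1 = 0 := by exact_mod_cast hre
  obtain ⟨p, q, p2, q2, hsre, _⟩ := comps hα hsK
  have hs3 : (Real.sqrt 3) ^ 2 = 3 := Real.sq_sqrt (by norm_num)
  rw [hsre] at hrre
  have hG : ((p^2 + 3*q^2 + p - 1 : ℚ) : ℝ) + ((2*p*q + q : ℚ):ℝ) * Real.sqrt 3 = 0 := by
    push_cast
    linear_combination hrre - (q:ℝ)^2 * hs3
  obtain ⟨hA, hB⟩ := sqrt3_lin _ _ hG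
  rcases mul_eq_zero.mp (show q * (2*p+1) = 0 by linear_combination hB) with h0 | h0
  · have h2 : (2*p+1)^2 = 5 := by linear_combination 4*hA - 12*q*h0
    exact ratsq_ne (2*p+1) 5 notSqNat.2.1 (by push_cast; linarith)
  · have h2 : (6*q)^2 = 15 := by linear_combination 12*hA - 3*(2*p+1)*h0
    exact ratsq_ne (6*q) 15 notSqNat.2.2.2.1 (by push_cast; linarith)

lemma prime_bound {α : ℂ} (hα : α ^ 2 = (Real.sqrt 3 : ℂ) - 2) {z : ℂ}
    (hz : z ∈ IntermediateField.adjoin ℚ {α}) {p : ℕ} (hp : p.Prime)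
    (hprim : IsPrimitiveRoot z p) : p ≤ 5 := by
  have hKfd : FiniteDimensional ℚ (IntermediateField.adjoin ℚ {α}) :=
    IntermediateField.adjoin.finiteDimensional (hint hα)
  have hfr : Module.finrank ℚ (IntermediateField.adjoin ℚ {α}) ≤ 4 := by
    rw [IntermediateField.adjoin.finrank (hint hα)]
    have hdvd : minpoly ℚ α ∣ (X^4 + 4*X^2 + 1) := minpoly.dvd ℚ α (hM0 hα)
    have := Polynomial.natDegree_le_of_dvd hdvd Mmonic.ne_zero
    rw [Mdeg] at this
    exact this
  set z' : (IntermediateField.adjoin ℚ {α}) := ⟨z, hz⟩ with hz'def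
  have hmp : minpoly ℚ z = minpoly ℚ z' := by
    have := minpoly.algebraMap_eq (A := ℚ) (B := (IntermediateField.adjoin ℚ {α}))
      (B' := ℂ) (algebraMap (IntermediateField.adjoin ℚ {α}) ℂ).injective z'
    rw [← this]
    rfl
  have hcyc : cyclotomic p ℚ = minpoly ℚ z := cyclotomic_eq_minpoly_rat hprim hp.pos
  have htot : p.totient ≤ 4 := by
    have h1 : (cyclotomic p ℚ).natDegree = p.totient := natDegree_cyclotomic p ℚ
    rw [← h1, hcyc, hmp]
    exact le_trans (minpoly.natDegree_le z') hfr
  rw [Nat.totient_prime hp] at htot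
  omega


/-- The quartic field $K=\mathbb{Q}(\alpha)$ with $\alpha^2=\sqrt3-2$ has
$\mathrm{Tor}(K^\times)=\{\pm 1\}$: its only roots of unity are $\pm 1$. -/
theorem statement16 (α : ℂ) (hα : α ^ 2 = (Real.sqrt 3 : ℂ) - 2) :
    ∀ x ∈ IntermediateField.adjoin ℚ {α}, (∃ n : ℕ, 0 < n ∧ x ^ n = 1) →
      x = 1 ∨ x = -1 := by
  intro x hx hex
  obtain ⟨n, hn, hxn⟩ := hex
  have hfo : IsOfFinOrder x := isOfFinOrder_iff_pow_eq_one.mpr ⟨n, hn, hxn⟩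
  set m := orderOf x with hmdef
  have hmpos : 0 < m := IsOfFinOrder.orderOf_pos hfo
  have hpow : x ^ m = 1 := pow_orderOf_eq_one x
  have hkey : ∀ k, k ∣ m → k ≠ 1 → (x ^ (m / k)) ^ k = 1 ∧ x ^ (m / k) ≠ 1 := by
    intro k hk hk1
    constructor
    · rw [← pow_mul, Nat.div_mul_cancel hk]; exact hpow
    · intro h1
      have hd : m ∣ m / k := orderOf_dvd_of_pow_eq_one h1
      have hk0 : 0 < k := Nat.pos_of_ne_zero (by
        rintro rfl
        exact absurd (Nat.eq_zero_of_zero_dvd hk) (by omega))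
      have hkle : k ≤ m := Nat.le_of_dvd hmpos hk
      have hklt : m / k < m := Nat.div_lt_self hmpos (by omega)
      have hkpos : 0 < m / k := Nat.div_pos hkle hk0
      have := Nat.le_of_dvd hkpos hd
      omega
  by_cases h3 : 3 ∣ m
  · exfalso
    obtain ⟨he, hne⟩ := hkey 3 h3 (by norm_num)
    exact no_order3 hα (pow_mem hx (m/3)) he hne
  by_cases h5 : 5 ∣ m
  · exfalso
    obtain ⟨he, hne⟩ := hkey 5 h5 (by norm_num)
    exact no_order5 hα (pow_mem hx (m/5)) he hne
  by_cases h4 : 4 ∣ m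
  · exfalso
    obtain ⟨he, hne2⟩ := hkey 2 (dvd_trans (by norm_num) h4) (by norm_num)
    have hv : x ^ (m/2) = -1 := by
      rcases mul_eq_zero.mp (show (x^(m/2) - 1) * (x^(m/2) + 1) = 0 by
          linear_combination he) with h | h
      · exact absurd (by linear_combination h) hne2
      · linear_combination h
    apply no_order4 hα (pow_mem hx (m/4))
    have : (x^(m/4))^2 = x^(m/2) := by rw [← pow_mul]; congr 1; omega
    rw [this, hv]
  have hm2 : m ∣ 2 := by
    by_contra hm2
    have hm3 : 3 ≤ m := by
      have h1 : m ≠ 1 := fun h => hm2 (h ▸ one_dvd 2)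
      have h2 : m ≠ 2 := fun h => hm2 (by rw [h])
      omega
    obtain ⟨p, hp, hpdvd, hpodd⟩ : ∃ p, p.Prime ∧ p ∣ m ∧ p ≠ 2 := by
      rcases Nat.even_or_odd m with hev | ho
      · have h2d : 2 ∣ m := hev.two_dvd
        have hk1 : m / 2 ≠ 1 := by omega
        have hkodd : ¬ 2 ∣ m / 2 := by intro h; exact h4 (by omega)
        refine ⟨(m/2).minFac, Nat.minFac_prime hk1, ?_, ?_⟩
        · exact dvd_trans ((m/2).minFac_dvd) (show m / 2 ∣ m from ⟨2, by omega⟩)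
        · intro h
          exact absurd ((m/2).minFac_dvd) (by rw [h]; exact hkodd)
      · refine ⟨m.minFac, Nat.minFac_prime (by omega), m.minFac_dvd, ?_⟩
        intro h
        have := m.minFac_dvd
        rw [h] at this
        rw [Nat.odd_iff] at ho
        omega
    obtain ⟨he, hne⟩ := hkey p hpdvd hp.one_lt.ne'
    have hord : orderOf (x ^ (m/p)) = p := by
      have hdvd : orderOf (x ^ (m/p)) ∣ p := orderOf_dvd_of_pow_eq_one he
      rcases (Nat.Prime.eq_one_or_self_of_dvd hp _ hdvd) with h | h
      · exact absurd (orderOf_eq_one_iff.mp h) hne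
      · exact h
    have hprim : IsPrimitiveRoot (x ^ (m/p)) p := by
      have h0 := IsPrimitiveRoot.orderOf (x ^ (m/p))
      rwa [hord] at h0
    have hple : p ≤ 5 := prime_bound hα (pow_mem hx (m/p)) hp hprim
    have hp2 := hp.two_le
    interval_cases p
    · exact hpodd rfl
    · exact h3 hpdvd
    · exact absurd hp (by norm_num)
    · exact h5 hpdvd
  have hx2 : x ^ 2 = 1 := orderOf_dvd_iff_pow_eq_one.mp (hmdef ▸ hm2)
  rcases mul_eq_zero.mp (show (x - 1) * (x + 1) = 0 by linear_combination hx2) with h | h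
  · left; linear_combination h
  · right; linear_combination h
end

section
/- Let K be a totally complex number field with at least two archimedean places such that for every archimedean place w of K there exists a nonzero ξ^{(w)} ∈ O_K with |ξ^{(w)}|_v < 1 for all archimedean v ≠ w and with Q(ξ^{(w)}) a proper subfield k^{(w)} of K. Then, with F̃ = ∩_{w|∞} k^{(w)}, the field F̃ is the maximal totally real subfield of K, K/F̃ is Galois, and Aut(K/F̃) is generated by the automorphisms σ_w^{-1} ρ σ_w over all archimedean places w. -/
open NumberField

open NumberField.InfinitePlace IntermediateField Module Polynomial

theorem key_lemma {K : Type*} [Field K] [NumberField K]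
    (w : InfinitePlace K) (hw : w.IsComplex) (ξ : 𝓞 K) (hξ : ξ ≠ 0)
    (hsm : ∀ v : InfinitePlace K, v ≠ w → v (ξ : K) < 1)
    (κ : IntermediateField ℚ K) (hκ : κ = IntermediateField.adjoin ℚ {(ξ : K)})
    (hproper : κ ≠ ⊤) :
    (∀ x : K, x ∈ κ → (starRingEnd ℂ) (w.embedding x) = w.embedding x) ∧
    (∀ x : K, (starRingEnd ℂ) (w.embedding x) = w.embedding x → x ∈ κ) ∧
    (∃ τ : K ≃ₐ[ℚ] K, ∀ x : K, w.embedding (τ x) = (starRingEnd ℂ) (w.embedding x)) := by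
  classical
  set σ := w.embedding with hσ
  have hmem : (ξ : K) ∈ κ := by
    rw [hκ]; exact IntermediateField.mem_adjoin_simple_self ℚ (ξ : K)
  letI : Algebra ↥κ ℂ := (σ.comp (algebraMap ↥κ K)).toAlgebra
  haveI : FiniteDimensional ↥κ K := FiniteDimensional.right ℚ ↥κ K
  have hamapC : ∀ c : ↥κ, algebraMap ↥κ ℂ c = σ (c : K) := fun c => rfl
  have hamapK : ∀ c : ↥κ, algebraMap ↥κ K c = (c : K) := fun c => rfl
  have hone : 1 ≤ w (ξ : K) := one_le_of_lt_one hξ (fun z hz => hsm z hz)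
  -- step 1 : classification of algHoms
  have step1 : ∀ ψ : K →ₐ[↥κ] ℂ, (ψ : K →+* ℂ) = σ ∨
      (ψ : K →+* ℂ) = ComplexEmbedding.conjugate σ := by
    intro ψ
    have hψξ : ψ (ξ : K) = σ (ξ : K) := by
      have h := ψ.commutes ⟨(ξ : K), hmem⟩
      rw [hamapC] at h
      rw [← h]; rfl
    have hmk : InfinitePlace.mk (ψ : K →+* ℂ) = w := by
      by_contra hne
      have h1 : InfinitePlace.mk (ψ : K →+* ℂ) (ξ : K) < 1 := hsm _ hne
      rw [InfinitePlace.apply] at h1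
      have h2 : ‖σ (ξ : K)‖ = w (ξ : K) := by
        rw [← norm_embedding_eq]
      rw [show (((ψ : K →+* ℂ)) (ξ : K)) = ψ (ξ:K) from rfl, hψξ, h2] at h1
      linarith
    rw [← InfinitePlace.mk_embedding w, InfinitePlace.mk_eq_iff] at hmk
    rw [← hσ] at hmk
    rcases hmk with h | h
    · exact Or.inl h
    · right
      rw [← h]
      exact (star_star (ψ : K →+* ℂ)).symm
  have hconj_ne : ComplexEmbedding.conjugate σ ≠ σ := by
    have h := (InfinitePlace.isComplex_iff).mp hw
    intro hc
    exact h ((ComplexEmbedding.isReal_iff).mpr hc)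
  -- step 3 : there is an algHom restricting to the conjugate embedding
  have step3 : ∃ ψ : K →ₐ[↥κ] ℂ, (ψ : K →+* ℂ) = ComplexEmbedding.conjugate σ := by
    by_contra h
    push_neg at h
    have hsub : Subsingleton (K →ₐ[↥κ] ℂ) := by
      constructor
      intro a b
      have ha := (step1 a).resolve_right (h a)
      have hb := (step1 b).resolve_right (h b)
      apply DFunLike.ext
      intro x
      have : (a : K →+* ℂ) x = (b : K →+* ℂ) x := by rw [ha, hb]
      exact this
    have hcard : Fintype.card (K →ₐ[↥κ] ℂ) ≤ 1 := Fintype.card_le_one_iff.mpr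
      (fun a b => Subsingleton.elim a b)
    rw [AlgHom.card ↥κ K ℂ] at hcard
    have : κ = ⊤ := by
      refine IntermediateField.eq_of_le_of_finrank_le' le_top ?_
      rw [IntermediateField.finrank_top]
      omega
    exact hproper this
  obtain ⟨ψc, hψc⟩ := step3
  -- part (1)
  have part1 : ∀ x : K, x ∈ κ → (starRingEnd ℂ) (σ x) = σ x := by
    intro x hx
    have h1 : ψc x = σ x := by
      have h := ψc.commutes ⟨x, hx⟩
      rw [hamapC] at h
      rw [← h]; rfl
    have h2 : ψc x = (starRingEnd ℂ) (σ x) := by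
      have : (ψc : K →+* ℂ) x = (ComplexEmbedding.conjugate σ) x := by rw [hψc]
      rw [ComplexEmbedding.conjugate_coe_eq] at this
      exact this
    rw [← h2, h1]
  -- finrank κ K = 2
  have hfr : finrank ↥κ K = 2 := by
    have hle : Fintype.card (K →ₐ[↥κ] ℂ) ≤ 2 := by
      have hinj : Function.Injective (fun ψ : K →ₐ[↥κ] ℂ =>
          ((ψ : K →+* ℂ) = ComplexEmbedding.conjugate σ : Prop)) := by
        intro a b hab
        simp only [eq_iff_iff] at hab
        have hext : ∀ {a b : K →ₐ[↥κ] ℂ}, (a : K →+* ℂ) = (b : K →+* ℂ) → a = b := by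
          intro a b h
          apply DFunLike.ext
          intro x
          exact RingHom.congr_fun h x
        rcases step1 a with ha | ha <;> rcases step1 b with hb | hb
        · exact hext (ha.trans hb.symm)
        · exfalso
          have := hab.mpr hb
          rw [ha] at this
          exact hconj_ne this.symm
        · exfalso
          have := hab.mp ha
          rw [hb] at this
          exact hconj_ne this.symm
        · exact hext (ha.trans hb.symm)
      have := Fintype.card_le_of_injective _ hinj
      simpa using this
    rw [AlgHom.card ↥κ K ℂ] at hle
    have hge : 2 ≤ finrank ↥κ K := by
      by_contra hlt
      push_neg at hlt
      interval_cases h : finrank ↥κ K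
      · exact (Module.finrank_pos (R := ↥κ) (M := K)).ne' h
      · exact hproper (IntermediateField.eq_of_le_of_finrank_le' le_top
          (by rw [IntermediateField.finrank_top]; omega))
    omega
  -- every element outside κ is primitive
  have hprim : ∀ x : K, x ∉ κ → IntermediateField.adjoin ↥κ {x} = ⊤ := by
    intro x hx
    set M := IntermediateField.adjoin ↥κ {x} with hM
    have hxM : x ∈ M := IntermediateField.mem_adjoin_simple_self ↥κ x
    have hMbot : M ≠ ⊥ := by
      intro hbot
      rw [hbot, IntermediateField.mem_bot] at hxM
      obtain ⟨c, hc⟩ := hxM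
      exact hx (hc ▸ c.2)
    have h1 : finrank ↥κ ↥M ≠ 1 := fun h => hMbot (IntermediateField.finrank_eq_one_iff.mp h)
    have hmul : finrank ↥κ ↥M * finrank ↥M K = 2 := by
      rw [finrank_mul_finrank]; exact hfr
    have h2 : finrank ↥M K = 1 := by
      have ha : finrank ↥κ ↥M ∣ 2 := ⟨finrank ↥M K, hmul.symm⟩
      have hale : finrank ↥κ ↥M ≤ 2 := Nat.le_of_dvd (by norm_num) ha
      have ha0 : finrank ↥κ ↥M ≠ 0 := by
        intro h0
        rw [h0, zero_mul] at hmul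
        omega
      have ha2 : finrank ↥κ ↥M = 2 := by omega
      rw [ha2] at hmul
      omega
    exact IntermediateField.eq_of_le_of_finrank_le' le_top
      (by rw [IntermediateField.finrank_top]; omega)
  -- part (2)
  have part2 : ∀ x : K, (starRingEnd ℂ) (σ x) = σ x → x ∈ κ := by
    intro x hx
    by_contra hxk
    have htop := hprim x hxk
    have hsubalg : Algebra.adjoin ↥κ {x} = ⊤ := by
      have := IntermediateField.adjoin_simple_toSubalgebra_of_isAlgebraic
        (IsIntegral.of_finite ↥κ x).isAlgebraic
      rw [htop] at this
      rw [← this]; rfl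
    -- the two algHoms agree on x hence everywhere
    set ψσ : K →ₐ[↥κ] ℂ := ⟨σ, fun c => rfl⟩ with hψσ
    have heq : ψσ = ψc := by
      have hsub : Algebra.adjoin ↥κ {x} ≤ AlgHom.equalizer ψσ ψc := by
        apply Algebra.adjoin_le
        intro y hy
        rw [Set.mem_singleton_iff] at hy
        subst hy
        show ψσ y = ψc y
        have h2 : ψc y = (starRingEnd ℂ) (σ y) := by
          have : (ψc : K →+* ℂ) y = (ComplexEmbedding.conjugate σ) y := by rw [hψc]
          rw [ComplexEmbedding.conjugate_coe_eq] at this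
          exact this
        rw [h2, hx]; rfl
      apply AlgHom.ext
      intro y
      have : y ∈ AlgHom.equalizer ψσ ψc := hsub (hsubalg ▸ Algebra.mem_top)
      exact this
    apply hconj_ne
    apply RingHom.ext
    intro y
    have : ψσ y = ψc y := by rw [heq]
    rw [← hψc]
    exact this.symm
  refine ⟨part1, part2, ?_⟩
  -- construct τ via normality
  obtain ⟨y, -, hy⟩ := SetLike.exists_of_lt (lt_top_iff_ne_top.mpr hproper)
  have hyint : IsIntegral ↥κ y := IsIntegral.of_finite ↥κ y
  have htop := hprim y hy
  have hsubalg : Algebra.adjoin ↥κ {y} = ⊤ := by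
    have := IntermediateField.adjoin_simple_toSubalgebra_of_isAlgebraic hyint.isAlgebraic
    rw [htop] at this
    rw [← this]; rfl
  set p := minpoly ↥κ y with hp
  have hpdeg : p.natDegree = 2 := by
    have := IntermediateField.adjoin.finrank hyint
    rw [htop, IntermediateField.finrank_top'] at this
    exact this.symm.trans hfr
  have hpne : p ≠ 0 := minpoly.ne_zero hyint
  set q := p.map (algebraMap ↥κ K) with hq
  have hqne : q ≠ 0 := Polynomial.map_ne_zero_iff (algebraMap ↥κ K).injective |>.mpr hpne
  have hqroot : q.IsRoot y := by
    rw [Polynomial.IsRoot, Polynomial.eval_map, ← Polynomial.aeval_def]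
    exact minpoly.aeval ↥κ y
  obtain ⟨r, hr⟩ := (Polynomial.dvd_iff_isRoot).mpr hqroot
  have hrne : r ≠ 0 := by
    intro h; rw [h, mul_zero] at hr; exact hqne hr
  have hrdeg : r.natDegree = 1 := by
    have h1 : q.natDegree = 2 := by
      rw [hq, Polynomial.natDegree_map, hpdeg]
    have h2 : q.natDegree = 1 + r.natDegree := by
      rw [hr, Polynomial.natDegree_mul (Polynomial.X_sub_C_ne_zero y) hrne,
        Polynomial.natDegree_X_sub_C]
    omega
  have hqsplits : q.Splits := by
    rw [hr]
    exact Polynomial.splits_X_sub_C_mul_iff.mpr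
      (Polynomial.Splits.of_natDegree_le_one (by omega))
  haveI hsplit : p.IsSplittingField ↥κ K := by
    constructor
    · exact hqsplits
    · rw [eq_top_iff, ← hsubalg]
      apply Algebra.adjoin_mono
      rw [Set.singleton_subset_iff, Polynomial.mem_rootSet]
      exact ⟨hpne, minpoly.aeval ↥κ y⟩
  haveI hnormal : Normal ↥κ K := Normal.of_isSplittingField p
  letI : Algebra K ℂ := σ.toAlgebra
  haveI : @IsScalarTower ↥κ K ℂ _ _ (Algebra.toSMul (R := ↥κ) (A := ℂ)) :=
    IsScalarTower.of_algebraMap_eq (fun c => rfl)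
  let τ₀ : K ≃ₐ[↥κ] K := AlgHom.restrictNormal' ψc K
  have hτ₀ : ∀ x : K, σ (τ₀ x) = (starRingEnd ℂ) (σ x) := by
    intro x
    have h := AlgHom.restrictNormal_commutes ψc K x
    have h2 : ψc (algebraMap K K x) = (starRingEnd ℂ) (σ x) := by
      rw [show algebraMap K K x = x from rfl]
      have : (ψc : K →+* ℂ) x = (ComplexEmbedding.conjugate σ) x := by rw [hψc]
      rw [ComplexEmbedding.conjugate_coe_eq] at this
      exact this
    calc σ (τ₀ x) = algebraMap K ℂ ((ψc.restrictNormal K) x) := rfl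
    _ = ψc (algebraMap K K x) := h
    _ = (starRingEnd ℂ) (σ x) := h2
  exact ⟨AlgEquiv.restrictScalars ℚ τ₀, fun x => hτ₀ x⟩

/-- If $K$ is totally complex with at least two archimedean places and for every
archimedean place $w$ there is a nonzero $\xi^{(w)}\in O_K$ with $|\xi^{(w)}|_v<1$
for all archimedean $v\ne w$ whose field $k^{(w)}=\mathbb{Q}(\xi^{(w)})$ is proper in
$K$, then $\tilde F=\bigcap_w k^{(w)}$ is the maximal totally real subfield of $K$,
$K/\tilde F$ is Galois, and $\mathrm{Aut}(K/\tilde F)$ is generated by the maps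
$\sigma_w^{-1}\rho\sigma_w$. -/
theorem statement19 (K : Type*) [Field K] [NumberField K]
    (htc : ∀ v : InfinitePlace K, v.IsComplex)
    (hcard : 2 ≤ Fintype.card (InfinitePlace K))
    (ξ : InfinitePlace K → 𝓞 K) (hξ : ∀ w, ξ w ≠ 0)
    (hsmall : ∀ w, ∀ v : InfinitePlace K, v ≠ w → placeNorm v (ξ w : K) < 1)
    (k : InfinitePlace K → IntermediateField ℚ K)
    (hk : ∀ w, k w = IntermediateField.adjoin ℚ {(ξ w : K)})
    (hproper : ∀ w, k w ≠ ⊤)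
    (F : IntermediateField ℚ K) (hF : F = ⨅ w : InfinitePlace K, k w) :
    (∀ x : K, x ∈ F ↔ ∀ φ : K →+* ℂ, (φ x).im = 0) ∧
    IsGalois (↥F) K ∧
    Subgroup.closure {g : K ≃ₐ[↥F] K | ∃ w : InfinitePlace K,
      ∀ x : K, w.embedding (g x) = starRingEnd ℂ (w.embedding x)} = ⊤ := by
  classical
  have hsm : ∀ w, ∀ v : InfinitePlace K, v ≠ w → v (ξ w : K) < 1 := by
    intro w v hv
    have h := hsmall w v hv
    by_contra hle
    push_neg at hle
    have h1 : (1:ℝ) ≤ placeNorm v (ξ w : K) := by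
      unfold placeNorm
      apply Real.one_le_rpow hle
      positivity
    linarith
  have key := fun w : InfinitePlace K =>
    key_lemma w (htc w) (ξ w) (hξ w) (hsm w) (k w) (hk w) (hproper w)
  have part1 : ∀ w, ∀ x : K, x ∈ k w →
      (starRingEnd ℂ) (w.embedding x) = w.embedding x := fun w => (key w).1
  have part2 : ∀ w, ∀ x : K,
      (starRingEnd ℂ) (w.embedding x) = w.embedding x → x ∈ k w := fun w => (key w).2.1
  choose τ hτ using fun w => (key w).2.2
  have hτfix : ∀ w, ∀ x : K, x ∈ k w → τ w x = x := by
    intro w x hx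
    have h := hτ w x
    rw [part1 w x hx] at h
    exact w.embedding.injective h
  have memInf : ∀ x : K, (x ∈ ⨅ w : InfinitePlace K, k w) ↔ ∀ w, x ∈ k w := by
    intro x
    rw [← SetLike.mem_coe, IntermediateField.coe_iInf]
    simp only [Set.mem_iInter, SetLike.mem_coe]
  set H₀ : Subgroup (K ≃ₐ[ℚ] K) := Subgroup.closure (Set.range τ) with hH₀
  have hFF : IntermediateField.fixedField H₀ = ⨅ w : InfinitePlace K, k w := by
    ext x
    constructor
    · intro hx
      rw [memInf]
      intro w
      have hfix : τ w x = x :=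
        hx ⟨τ w, Subgroup.subset_closure (Set.mem_range_self w)⟩
      apply part2 w x
      have h := hτ w x
      rw [hfix] at h
      exact h.symm
    · intro hx
      rw [memInf] at hx
      rintro ⟨g, hg⟩
      show g x = x
      refine Subgroup.closure_induction (p := fun g _ => g x = x) ?_ rfl ?_ ?_ hg
      · rintro g' ⟨w, rfl⟩
        exact hτfix w x (hx w)
      · intro a b _ _ ha hb
        show a (b x) = x
        rw [hb, ha]
      · intro a _ ha
        show a⁻¹ x = x
        nth_rewrite 1 [← ha]
        exact a.symm_apply_apply x
  have hF2 : F = IntermediateField.fixedField H₀ := by rw [hF, ← hFF]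
  rw [hF2]
  refine ⟨?_, IsGalois.of_fixed_field K H₀, ?_⟩
  · intro x
    constructor
    · intro hx φ
      have hxk : ∀ w, x ∈ k w := (memInf x).mp (hFF ▸ hx)
      have hreal := part1 (InfinitePlace.mk φ) x (hxk (InfinitePlace.mk φ))
      rcases InfinitePlace.embedding_mk_eq φ with h | h
      · rw [h] at hreal
        exact Complex.conj_eq_iff_im.mp hreal
      · rw [h] at hreal
        rw [show (ComplexEmbedding.conjugate φ : K →+* ℂ) x
          = (starRingEnd ℂ) (φ x) from rfl] at hreal
        rw [Complex.conj_conj] at hreal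
        have : (starRingEnd ℂ) (φ x) = φ x := hreal.symm
        exact Complex.conj_eq_iff_im.mp this
    · intro hx
      have hxk : ∀ w, x ∈ k w := by
        intro w
        apply part2 w x
        exact Complex.conj_eq_iff_im.mpr (hx w.embedding)
      exact hFF ▸ ((memInf x).mpr hxk)
  · -- generation
    set L := IntermediateField.fixedField H₀ with hL
    have hLle : ∀ w, ∀ c : ↥L, (c : K) ∈ k w := by
      intro w c
      have h2 : (c : K) ∈ (⨅ w : InfinitePlace K, k w) := by
        rw [← hFF]; exact c.2
      exact (memInf _).mp h2 w
    have hcomm : ∀ w : InfinitePlace K, ∀ c : ↥L,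
        (τ w).toRingEquiv ((algebraMap ↥L K) c) = (algebraMap ↥L K) c := by
      intro w c
      show τ w (c : K) = (c : K)
      exact hτfix w _ (hLle w c)
    let gw : InfinitePlace K → K ≃ₐ[↥L] K := fun w =>
      AlgEquiv.ofRingEquiv (f := (τ w).toRingEquiv) (hcomm w)
    have hgw : ∀ w, ∀ x : K, (gw w) x = τ w x := fun w x => rfl
    set S := {g : K ≃ₐ[↥L] K | ∃ w : InfinitePlace K,
      ∀ x : K, w.embedding (g x) = starRingEnd ℂ (w.embedding x)} with hS
    have hmemS : ∀ w, gw w ∈ S := by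
      intro w
      exact ⟨w, fun x => by rw [hgw w x]; exact hτ w x⟩
    have hfixbot : IntermediateField.fixedField (Subgroup.closure S) = ⊥ := by
      apply le_antisymm ?_ bot_le
      intro x hx
      have hxk : ∀ w, x ∈ k w := by
        intro w
        have hgx : gw w x = x :=
          hx ⟨gw w, Subgroup.subset_closure (hmemS w)⟩
        apply part2 w x
        have h := hτ w x
        rw [← hgw w x, hgx] at h
        exact h.symm
      have hxL : x ∈ L := by rw [hFF]; exact (memInf x).mpr hxk
      rw [IntermediateField.mem_bot]
      exact ⟨⟨x, hxL⟩, rfl⟩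
    have hfs := IntermediateField.fixingSubgroup_fixedField (Subgroup.closure S)
    rw [hfixbot] at hfs
    rw [← hfs]
    rw [eq_top_iff]
    intro g _
    have hg : g ∈ _root_.fixingSubgroup (K ≃ₐ[↥L] K)
        ((⊥ : IntermediateField ↥L K) : Set K) := by
      rw [_root_.mem_fixingSubgroup_iff]
      intro y hy
      rw [SetLike.mem_coe, IntermediateField.mem_bot] at hy
      obtain ⟨c, rfl⟩ := hy
      exact g.commutes c
    exact hg
end
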